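/- arXiv:2301.08384 — 3 statements merged into one kernel-verified Lean document; each statement's English description precedes it below -/
import Mathlib

section
/- Let γ : [0,L] → ℝ² be a well-periodic arclength parameterized planar curve with signed curvature k. If there are three points 0 ≤ s₁ < s₂ < s₃ ≤ L such that k(s₁) = k(s₂) = k(s₃) = 0 and k(s) ≠ 0 for all s ∈ (s₁,s₂) ∪ (s₂,s₃), then: (a) γ'(s₁ + σ) = γ'(s₃ + σ) whenever both s₁ + σ and s₃ + σ lie in [0,L]; and (b) k(σ + s₁) = −k(s₃ − σ) whenever both σ + s₁ and s₃ − σ lie in [0,L]. -/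
open MeasureTheory Set Filter RealInnerProductSpace

noncomputable section

/-- The Euclidean plane. -/
abbrev R2 := EuclideanSpace ℝ (Fin 2)

/-- The point of the plane with coordinates `(a, b)`. -/
def e2 (a b : ℝ) : R2 := (WithLp.equiv 2 (Fin 2 → ℝ)).symm ![a, b]

/-- Counterclockwise rotation by `π/2`. -/
def rot (v : R2) : R2 := e2 (-(v 1)) (v 0)

/-- The signed curvature of an arclength parameterized planar curve `γ`, defined via
`γ'' = k • R γ'`, i.e. `k = ⟪γ'', R γ'⟫` (meaningful a.e. for `W^{2,p}` curves, and
everywhere for `C²` curves). -/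
def curvOf (γ : ℝ → R2) (s : ℝ) : ℝ := ⟪deriv (deriv γ) s, rot (deriv γ s)⟫

/-- `γ` (restricted to `[0,L]`) is an arclength parameterized `W^{2,p}` planar curve:
`γ` is `C¹` and unit-speed on `[0,L]`, `γ'` is absolutely continuous (it is recovered from
its a.e. derivative by integration), and the second derivative lies in `L^p(0,L)`. -/
structure ArcCurve (p L : ℝ) (γ : ℝ → R2) : Prop where
  c1 : ContDiffOn ℝ 1 γ (Icc 0 L)
  unit : ∀ s ∈ Icc (0:ℝ) L, ‖deriv γ s‖ = 1
  ac : ∀ a ∈ Icc (0:ℝ) L, ∀ b ∈ Icc (0:ℝ) L,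
    deriv γ b - deriv γ a = ∫ s in a..b, deriv (deriv γ) s
  lp : MemLp (fun s => deriv (deriv γ) s) (ENNReal.ofReal p) (volume.restrict (Icc 0 L))

/-- The `W^{2,p}`-distance between two curves on `[0,L]`. -/
def W2Dist (p L : ℝ) (γ ξ : ℝ → R2) : ℝ :=
  (∫ s in Icc (0:ℝ) L, (‖γ s - ξ s‖ ^ p + ‖deriv γ s - deriv ξ s‖ ^ p +
    ‖deriv (deriv γ) s - deriv (deriv ξ) s‖ ^ p)) ^ (1 / p)

/-- The energy `F(γ) = ∫₀^L f(|k|) ds`. -/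
def En (f : ℝ → ℝ) (L : ℝ) (γ : ℝ → R2) : ℝ := ∫ s in Icc (0:ℝ) L, f |curvOf γ s|

/-- The admissible class `A_c` with clamped boundary conditions. -/
def AdmC (p L : ℝ) (P0 P1 V0 V1 : R2) (γ : ℝ → R2) : Prop :=
  ArcCurve p L γ ∧ γ 0 = P0 ∧ γ L = P1 ∧ deriv γ 0 = V0 ∧ deriv γ L = V1

/-- Global minimizer of `F` in `A_c`. -/
def IsGlobalMinC (f : ℝ → ℝ) (p L : ℝ) (P0 P1 V0 V1 : R2) (γ : ℝ → R2) : Prop :=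
  AdmC p L P0 P1 V0 V1 γ ∧ ∀ ξ, AdmC p L P0 P1 V0 V1 ξ → En f L γ ≤ En f L ξ

/-- Local minimizer of `F` in `A_c` (w.r.t. the `W^{2,p}` topology). -/
def IsLocalMinC (f : ℝ → ℝ) (p L : ℝ) (P0 P1 V0 V1 : R2) (γ : ℝ → R2) : Prop :=
  AdmC p L P0 P1 V0 V1 γ ∧
    ∃ δ > 0, ∀ ξ, AdmC p L P0 P1 V0 V1 ξ → W2Dist p L γ ξ < δ → En f L γ ≤ En f L ξ

/-- The admissible class `A_pin` with pinned boundary conditions. -/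
def AdmP (p L : ℝ) (P0 P1 : R2) (γ : ℝ → R2) : Prop :=
  ArcCurve p L γ ∧ γ 0 = P0 ∧ γ L = P1

/-- Local minimizer of `F` in `A_pin` (w.r.t. the `W^{2,p}` topology). -/
def IsLocalMinP (f : ℝ → ℝ) (p L : ℝ) (P0 P1 : R2) (γ : ℝ → R2) : Prop :=
  AdmP p L P0 P1 γ ∧
    ∃ δ > 0, ∀ ξ, AdmP p L P0 P1 ξ → W2Dist p L γ ξ < δ → En f L γ ≤ En f L ξ

/-- `k` (the curvature of a curve on `[0,L]`) is well-periodic with antiperiod `T`: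
`k` is continuous on `[0,L]` and `k(s) = Φ(s - s₀)` for a continuous odd function `Φ`
which is antiperiodic with antiperiod `T > 0` and whose zero set is exactly `Tℤ`. -/
def WellPeriodicWith (L : ℝ) (k : ℝ → ℝ) (T : ℝ) : Prop :=
  ContinuousOn k (Icc 0 L) ∧ 0 < T ∧
  ∃ (s₀ : ℝ) (Φ : ℝ → ℝ), Continuous Φ ∧ (∀ x, Φ (-x) = -Φ x) ∧ (∀ x, Φ (x + T) = -Φ x) ∧
    (∀ x : ℝ, Φ x = 0 ↔ ∃ n : ℤ, x = n * T) ∧ (∀ s ∈ Icc (0:ℝ) L, k s = Φ (s - s₀))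

/-- Well-periodic curvature (with some antiperiod). -/
def WellPeriodic (L : ℝ) (k : ℝ → ℝ) : Prop := ∃ T, WellPeriodicWith L k T

/-- `(m/2)`-fold well-periodic curvature: well-periodic with `k(0) = 0` and antiperiod `L/m`. -/
def MFold (L : ℝ) (m : ℕ) (k : ℝ → ℝ) : Prop := k 0 = 0 ∧ WellPeriodicWith L k (L / m)

lemma e2_zero (a b : ℝ) : e2 a b 0 = a := rfl
lemma e2_one (a b : ℝ) : e2 a b 1 = b := rfl

lemma e2_eta (v : R2) : e2 (v 0) (v 1) = v := by
  ext i; fin_cases i <;> rfl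

lemma inner_R2 (x y : R2) : ⟪x, y⟫ = x 0 * y 0 + x 1 * y 1 := by
  simp [PiLp.inner_apply, Fin.sum_univ_two, RCLike.inner_apply, conj_trivial]
  ring

lemma smul_e2 (c a b : ℝ) : c • e2 a b = e2 (c*a) (c*b) := by
  ext i; fin_cases i <;> simp [e2]

lemma e2_smul_add (a b : ℝ) : e2 a b = a • e2 1 0 + b • e2 0 1 := by
  ext i; fin_cases i <;> simp [e2]

lemma hasDerivAt_e2 {f g : ℝ → ℝ} {f' g' t : ℝ} (hf : HasDerivAt f f' t)
    (hg : HasDerivAt g g' t) :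
    HasDerivAt (fun s => e2 (f s) (g s)) (e2 f' g') t := by
  have h := (hf.smul_const (e2 1 0)).add (hg.smul_const (e2 0 1))
  have hfun : (fun s => e2 (f s) (g s)) = (fun y => f y • e2 1 0) + (fun y => g y • e2 0 1) :=
    funext fun s => e2_smul_add _ _
  rw [hfun, e2_smul_add f' g']
  exact h

lemma inner_rot_skew (x y : R2) : ⟪rot x, y⟫ = -⟪x, rot y⟫ := by
  simp only [inner_R2, rot, e2_zero, e2_one]; ring

lemma inner_const_of_ode {a b : ℝ} {v w : ℝ → R2} {c : ℝ → ℝ}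
    (hv : ∀ s ∈ Icc a b, HasDerivAt v (c s • rot (v s)) s)
    (hw : ∀ s ∈ Icc a b, HasDerivAt w (c s • rot (w s)) s) :
    ∀ s ∈ Icc a b, ⟪v s, w s⟫ = ⟪v a, w a⟫ := by
  have key : ∀ x ∈ Icc a b, HasDerivAt (fun t => ⟪v t, w t⟫) 0 x := by
    intro x hx
    have h := HasDerivAt.inner ℝ (hv x hx) (hw x hx)
    have hz : ⟪v x, c x • rot (w x)⟫ + ⟪c x • rot (v x), w x⟫ = 0 := by
      rw [real_inner_smul_right, real_inner_smul_left, inner_rot_skew]; ring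
    rwa [hz] at h
  have hcont : ContinuousOn (fun t => ⟪v t, w t⟫) (Icc a b) :=
    fun x hx => (key x hx).continuousAt.continuousWithinAt
  exact constant_of_has_deriv_right_zero hcont
    (fun x hx => ((key x (Ico_subset_Icc_self hx)).hasDerivWithinAt))

lemma eq_of_inner_one {x y : R2} (hx : ‖x‖ = 1) (hy : ‖y‖ = 1) (hxy : ⟪x, y⟫ = 1) : x = y := by
  have h := norm_sub_sq_real x y
  rw [hx, hy, hxy] at h
  have h0 : ‖x - y‖ ^ 2 = 0 := by rw [h]; ring
  have := pow_eq_zero_iff (n := 2) (by norm_num) |>.1 h0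
  rwa [norm_eq_zero, sub_eq_zero] at this


/-- Lemma: symmetry of well-periodic curves. -/
theorem wellPeriodic_symmetry (L : ℝ) (hL : 0 < L) (γ : ℝ → R2) (k : ℝ → ℝ)
    (hC1 : ContDiffOn ℝ 1 γ (Icc 0 L)) (hunit : ∀ s ∈ Icc (0:ℝ) L, ‖deriv γ s‖ = 1)
    (hcurv : ∀ s ∈ Icc (0:ℝ) L, HasDerivAt (deriv γ) (k s • rot (deriv γ s)) s)
    (s₀ T : ℝ) (Φ : ℝ → ℝ) (hT : 0 < T) (hΦcont : Continuous Φ)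
    (hodd : ∀ x, Φ (-x) = -Φ x) (hanti : ∀ x, Φ (x + T) = -Φ x)
    (hzero : ∀ x : ℝ, Φ x = 0 ↔ ∃ n : ℤ, x = n * T)
    (hkΦ : ∀ s ∈ Icc (0:ℝ) L, k s = Φ (s - s₀))
    (s₁ s₂ s₃ : ℝ) (hs₁0 : 0 ≤ s₁) (hs₁₂ : s₁ < s₂) (hs₂₃ : s₂ < s₃) (hs₃L : s₃ ≤ L)
    (hz : k s₁ = 0 ∧ k s₂ = 0 ∧ k s₃ = 0)
    (hnz : ∀ s, s ∈ Ioo s₁ s₂ ∪ Ioo s₂ s₃ → k s ≠ 0) :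
    (∀ σ : ℝ, s₁ + σ ∈ Icc (0:ℝ) L → s₃ + σ ∈ Icc (0:ℝ) L →
      deriv γ (s₁ + σ) = deriv γ (s₃ + σ)) ∧
    (∀ σ : ℝ, σ + s₁ ∈ Icc (0:ℝ) L → s₃ - σ ∈ Icc (0:ℝ) L →
      k (σ + s₁) = -(k (s₃ - σ))) := by
  obtain ⟨hk1, hk2, hk3⟩ := hz
  have hs₁m : s₁ ∈ Icc (0:ℝ) L := ⟨hs₁0, by linarith⟩
  have hs₂m : s₂ ∈ Icc (0:ℝ) L := ⟨by linarith, by linarith⟩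
  have hs₃m : s₃ ∈ Icc (0:ℝ) L := ⟨by linarith, hs₃L⟩
  obtain ⟨n₁, hn₁⟩ := (hzero _).1 (by rw [← hkΦ s₁ hs₁m]; exact hk1)
  obtain ⟨n₂, hn₂⟩ := (hzero _).1 (by rw [← hkΦ s₂ hs₂m]; exact hk2)
  obtain ⟨n₃, hn₃⟩ := (hzero _).1 (by rw [← hkΦ s₃ hs₃m]; exact hk3)
  have hper : Function.Periodic Φ (2*T) := by
    intro x
    have h1 := hanti (x + T)
    have h2 := hanti x
    have hx : x + 2*T = x + T + T := by ring
    rw [hx, h1, h2, neg_neg]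
  -- consecutive zeros differ by exactly T
  have step : ∀ x y : ℝ, x ∈ Icc (0:ℝ) L → y ∈ Icc (0:ℝ) L → x < y →
      (∀ s, s ∈ Ioo x y → k s ≠ 0) → ∀ m n : ℤ, x - s₀ = m*T → y - s₀ = n*T →
      n = m + 1 := by
    intro x y hx hy hxy hno m n hm hn
    have hmn : m < n := by
      by_contra h
      push_neg at h
      have hc : (n:ℝ) ≤ (m:ℝ) := by exact_mod_cast h
      nlinarith
    by_contra h
    have hmn2 : m + 2 ≤ n := by omega
    have hc : ((m:ℝ) + 2) ≤ (n:ℝ) := by exact_mod_cast hmn2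
    have hsy : x + T < y := by nlinarith
    have hsmem : x + T ∈ Icc (0:ℝ) L := ⟨by linarith [hx.1], by linarith [hy.2]⟩
    have hks : k (x + T) = 0 := by
      rw [hkΦ _ hsmem]
      refine (hzero _).2 ⟨m+1, ?_⟩
      push_cast
      linarith
    exact hno (x + T) ⟨by linarith, hsy⟩ hks
  have h21 : n₂ = n₁ + 1 := step s₁ s₂ hs₁m hs₂m hs₁₂ (fun s hs => hnz s (Or.inl hs)) n₁ n₂ hn₁ hn₂
  have h32 : n₃ = n₂ + 1 := step s₂ s₃ hs₂m hs₃m hs₂₃ (fun s hs => hnz s (Or.inr hs)) n₂ n₃ hn₂ hn₃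
  have hcast : (n₃:ℝ) = (n₁:ℝ) + 2 := by exact_mod_cast (by omega : n₃ = n₁ + 2)
  have hs31 : s₃ = s₁ + 2*T := by linear_combination hn₃ - hn₁ + T * hcast
  -- part (b)
  have partb : ∀ σ : ℝ, σ + s₁ ∈ Icc (0:ℝ) L → s₃ - σ ∈ Icc (0:ℝ) L →
      k (σ + s₁) = -(k (s₃ - σ)) := by
    intro σ h1 h2
    rw [hkΦ _ h1, hkΦ _ h2]
    have p1 : Φ (σ + s₁ - s₀) = Φ (σ - (n₁:ℝ)*T) := by
      have hp := (hper.int_mul n₁) (σ - (n₁:ℝ)*T)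
      rw [show σ - (n₁:ℝ)*T + (n₁:ℝ)*(2*T) = σ + (n₁:ℝ)*T by ring] at hp
      rw [show σ + s₁ - s₀ = σ + (n₁:ℝ)*T by linarith]
      exact hp
    have p2 : Φ (s₃ - σ - s₀) = -Φ (σ - (n₁:ℝ)*T) := by
      have hp := hper ((n₁:ℝ)*T - σ)
      rw [show s₃ - σ - s₀ = (n₁:ℝ)*T - σ + 2*T by linarith]
      rw [hp, show (n₁:ℝ)*T - σ = -(σ - (n₁:ℝ)*T) by ring, hodd]
    rw [p1, p2, neg_neg]
  -- setup for part (a)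
  set K : ℝ → ℝ := fun s => Φ (s - s₀) with hKdef
  have hKcont : Continuous K := hΦcont.comp (continuous_id.sub continuous_const)
  have hcurvK : ∀ s ∈ Icc (0:ℝ) L, HasDerivAt (deriv γ) (K s • rot (deriv γ s)) s := by
    intro s hs
    have h := hcurv s hs
    rwa [hkΦ s hs] at h
  set θ : ℝ → ℝ := fun s => ∫ t in s₁..s, K t with hθdef
  have hθ : ∀ s, HasDerivAt θ (K s) s := fun s => (hKcont.integral_hasStrictDerivAt s₁ s).hasDerivAt
  set a0 := deriv γ s₁ 0 with ha0
  set b0 := deriv γ s₁ 1 with hb0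
  set u : ℝ → R2 := fun s =>
    e2 (Real.cos (θ s) * a0 - Real.sin (θ s) * b0)
       (Real.sin (θ s) * a0 + Real.cos (θ s) * b0) with hudef
  have hu : ∀ s, HasDerivAt u (K s • rot (u s)) s := by
    intro s
    have hcos : HasDerivAt (fun t => Real.cos (θ t)) (-Real.sin (θ s) * K s) s := (hθ s).cos
    have hsin : HasDerivAt (fun t => Real.sin (θ t)) (Real.cos (θ s) * K s) s := (hθ s).sin
    have h1 := (hcos.mul_const a0).sub (hsin.mul_const b0)
    have h2 := (hsin.mul_const a0).add (hcos.mul_const b0)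
    have h := hasDerivAt_e2 h1 h2
    have hval : K s • rot (u s)
        = e2 (-Real.sin (θ s) * K s * a0 - Real.cos (θ s) * K s * b0)
             (Real.cos (θ s) * K s * a0 + -Real.sin (θ s) * K s * b0) := by
      simp only [hudef, rot, e2_zero, e2_one, smul_e2]
      exact congrArg₂ e2 (by ring) (by ring)
    rw [hval]
    exact h
  have hθ1 : θ s₁ = 0 := intervalIntegral.integral_same
  have hu1 : u s₁ = deriv γ s₁ := by
    rw [hudef]
    simp only [hθ1, Real.cos_zero, Real.sin_zero, one_mul, zero_mul, sub_zero, zero_add,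
      ha0, hb0]
    exact e2_eta _
  have hoddint : (∫ x in (-T)..T, Φ x) = 0 := by
    have h1 : (∫ x in (-T)..T, Φ (-x)) = ∫ x in (-T)..T, Φ x := by
      have := intervalIntegral.integral_comp_neg (a := -T) (b := T) (f := Φ)
      simpa using this
    have h2 : (∫ x in (-T)..T, Φ (-x)) = -∫ x in (-T)..T, Φ x := by
      simp only [hodd]
      exact intervalIntegral.integral_neg
    linarith
  have hb : s₃ - s₀ = (n₁:ℝ)*T + 2*T := by linear_combination hn₃ + T * hcast
  have hθ3 : θ s₃ = 0 := by
    have hcs : (∫ t in s₁..s₃, Φ (t - s₀)) = ∫ t in (s₁ - s₀)..(s₃ - s₀), Φ t :=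
      intervalIntegral.integral_comp_sub_right (a := s₁) (b := s₃) Φ s₀
    have hshift := hper.intervalIntegral_add_eq ((n₁:ℝ)*T) (-T)
    calc θ s₃ = ∫ t in (s₁ - s₀)..(s₃ - s₀), Φ t := hcs
      _ = ∫ t in ((n₁:ℝ)*T)..((n₁:ℝ)*T + 2*T), Φ t := by rw [hn₁, hb]
      _ = ∫ t in (-T)..(-T + 2*T), Φ t := hshift
      _ = ∫ t in (-T)..T, Φ t := by rw [show -T + 2*T = T by ring]
      _ = 0 := hoddint
  have hu3 : u s₃ = deriv γ s₁ := by
    rw [hudef]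
    simp only [hθ3, Real.cos_zero, Real.sin_zero, one_mul, zero_mul, sub_zero, zero_add,
      ha0, hb0]
    exact e2_eta _
  -- step A : deriv γ s₃ = deriv γ s₁
  have hIcc13 : Icc s₁ s₃ ⊆ Icc (0:ℝ) L := Icc_subset_Icc hs₁0 hs₃L
  have hA := inner_const_of_ode (a := s₁) (b := s₃)
      (fun s hs => hcurvK s (hIcc13 hs)) (fun s _ => hu s) s₃
      ⟨le_of_lt (lt_trans hs₁₂ hs₂₃), le_refl s₃⟩
  rw [hu3, hu1] at hA
  have hinner1 : ⟪deriv γ s₁, deriv γ s₁⟫ = 1 := by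
    rw [real_inner_self_eq_norm_sq, hunit s₁ hs₁m]; norm_num
  have hV3 : deriv γ s₃ = deriv γ s₁ :=
    eq_of_inner_one (hunit s₃ hs₃m) (hunit s₁ hs₁m) (hA.trans hinner1)
  -- step B : parallel tangents
  have hKshift : ∀ σ : ℝ, K (s₃ + σ) = K (s₁ + σ) := by
    intro σ
    have hp := hper (s₁ + σ - s₀)
    have he : s₃ + σ - s₀ = s₁ + σ - s₀ + 2*T := by linarith
    rw [hKdef]
    simp only
    rw [he, hp]
  have hmem1 : ∀ σ ∈ Icc (-s₁) (L - s₃), s₁ + σ ∈ Icc (0:ℝ) L := by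
    intro σ hσ
    exact ⟨by linarith [hσ.1], by linarith [hσ.2]⟩
  have hmem3 : ∀ σ ∈ Icc (-s₁) (L - s₃), s₃ + σ ∈ Icc (0:ℝ) L := by
    intro σ hσ
    exact ⟨by linarith [hσ.1], by linarith [hσ.2]⟩
  have hv : ∀ σ ∈ Icc (-s₁) (L - s₃),
      HasDerivAt (fun σ => deriv γ (s₁ + σ)) (K (s₁ + σ) • rot (deriv γ (s₁ + σ))) σ := by
    intro σ hσ
    have h := (hcurvK _ (hmem1 σ hσ)).scomp σ ((hasDerivAt_id σ).const_add s₁)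
    simp at h; exact h
  have hw : ∀ σ ∈ Icc (-s₁) (L - s₃),
      HasDerivAt (fun σ => deriv γ (s₃ + σ)) (K (s₁ + σ) • rot (deriv γ (s₃ + σ))) σ := by
    intro σ hσ
    have h := (hcurvK _ (hmem3 σ hσ)).scomp σ ((hasDerivAt_id σ).const_add s₃)
    rw [← hKshift σ]
    simp at h; exact h
  have hB := inner_const_of_ode (a := -s₁) (b := L - s₃)
      (v := fun σ => deriv γ (s₁ + σ)) (w := fun σ => deriv γ (s₃ + σ))
      (c := fun σ => K (s₁ + σ)) hv hw
  refine ⟨?_, partb⟩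
  intro σ h1 h3
  have hσI : σ ∈ Icc (-s₁) (L - s₃) := ⟨by linarith [h1.1], by linarith [h3.2]⟩
  have h0I : (0:ℝ) ∈ Icc (-s₁) (L - s₃) := ⟨by linarith, by linarith⟩
  have hinner : ⟪deriv γ (s₁ + σ), deriv γ (s₃ + σ)⟫
      = ⟪deriv γ (s₁ + 0), deriv γ (s₃ + 0)⟫ := (hB σ hσI).trans (hB 0 h0I).symm
  simp only [add_zero] at hinner
  rw [hV3, hinner1] at hinner
  exact eq_of_inner_one (hunit _ h1) (hunit _ h3) hinner
end
end

section
/- Let γ = (x,y) : [0,L] → ℝ² be a (1/2)-fold well-periodic arclength parameterized curve. If γ(0) = (0,0) and γ(L) = (l,0) with some l ≠ 0, then x(L − s) + x(s) = l and y(L − s) = y(s) for all s ∈ [0,L]. -/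
open MeasureTheory Set Filter RealInnerProductSpace

noncomputable section

set_option maxHeartbeats 2000000 in
/-- Lemma: reflection symmetry of half-fold well-periodic curves. -/
theorem halfFold_reflection_symmetry (L : ℝ) (hL : 0 < L) (γ : ℝ → R2) (k : ℝ → ℝ)
    (hC1 : ContDiffOn ℝ 1 γ (Icc 0 L)) (hunit : ∀ s ∈ Icc (0:ℝ) L, ‖deriv γ s‖ = 1)
    (hcurv : ∀ s ∈ Icc (0:ℝ) L, HasDerivAt (deriv γ) (k s • rot (deriv γ s)) s)
    (hk0 : k 0 = 0)
    (s₀ : ℝ) (Φ : ℝ → ℝ) (hΦcont : Continuous Φ)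
    (hodd : ∀ x, Φ (-x) = -Φ x) (hanti : ∀ x, Φ (x + L) = -Φ x)
    (hzero : ∀ x : ℝ, Φ x = 0 ↔ ∃ n : ℤ, x = n * L)
    (hkΦ : ∀ s ∈ Icc (0:ℝ) L, k s = Φ (s - s₀))
    (l : ℝ) (hl : l ≠ 0) (hstart : γ 0 = 0) (hend : γ L = e2 l 0) :
    ∀ s ∈ Icc (0:ℝ) L, γ (L - s) 0 + γ s 0 = l ∧ γ (L - s) 1 = γ s 1 := by
  have hL0 : (0:ℝ) ∈ Icc (0:ℝ) L := ⟨le_refl _, hL.le⟩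
  have hLL : L ∈ Icc (0:ℝ) L := ⟨hL.le, le_refl _⟩
  have hmem : ∀ s ∈ Icc (0:ℝ) L, L - s ∈ Icc (0:ℝ) L := fun s hs =>
    ⟨by linarith [hs.2], by linarith [hs.1]⟩
  -- Φ is symmetric about L/2
  have hΦrefl : ∀ y, Φ (L - y) = Φ y := by
    intro y
    have h1 := hanti (-y)
    rw [hodd] at h1
    rw [show L - y = -y + L by ring, h1, neg_neg]
  -- k is symmetric about L/2
  have ksym : ∀ s ∈ Icc (0:ℝ) L, k (L - s) = k s := by
    intro s hs
    have h0 : Φ (-s₀) = 0 := by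
      have h := hkΦ 0 hL0
      rw [zero_sub] at h
      rw [← h, hk0]
    obtain ⟨n, hn⟩ := (hzero _).mp h0
    have hper : Function.Periodic Φ ((n : ℝ) * (2 * L)) :=
      (Function.Antiperiodic.periodic_two_mul hanti).int_mul n
    rw [hkΦ _ (hmem s hs), hkΦ s hs]
    have e1 : L - s - s₀ = (L - (s + (n:ℝ) * L)) + (n:ℝ) * (2 * L) := by
      have : -s₀ = (n:ℝ) * L := hn
      linarith
    rw [e1, hper, hΦrefl]
    congr 1
    have : -s₀ = (n:ℝ) * L := hn
    linarith
  set v : ℝ → R2 := deriv γ with hvdef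
  -- unit speed in coordinates
  have hunit2 : ∀ s ∈ Icc (0:ℝ) L, (v s 0)^2 + (v s 1)^2 = 1 := by
    intro s hs
    have h := hunit s hs
    rw [EuclideanSpace.norm_eq] at h
    have h2 := Real.sqrt_eq_one.mp h
    simpa [Fin.sum_univ_two, Real.norm_eq_abs, sq_abs] using h2
  -- γ is differentiable (in the full sense) at every point of [0, L]
  have hγd : ∀ s ∈ Icc (0:ℝ) L, HasDerivAt γ (v s) s := by
    intro s hs
    have h1 : v s ≠ 0 := by
      intro h
      have h2 := hunit s hs
      rw [h] at h2
      simp at h2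
    have h2 : DifferentiableAt ℝ γ s := by
      by_contra h
      exact h1 (deriv_zero_of_not_differentiableAt h)
    exact h2.hasDerivAt
  have hγd0 : ∀ s ∈ Icc (0:ℝ) L, HasDerivAt (fun t => γ t 0) (v s 0) s := by
    intro s hs
    have := (EuclideanSpace.proj (0 : Fin 2)).hasFDerivAt.comp_hasDerivAt s (hγd s hs)
    exact this
  have hγd1 : ∀ s ∈ Icc (0:ℝ) L, HasDerivAt (fun t => γ t 1) (v s 1) s := by
    intro s hs
    have := (EuclideanSpace.proj (1 : Fin 2)).hasFDerivAt.comp_hasDerivAt s (hγd s hs)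
    exact this
  -- coordinate form of the curvature ODE
  have hv0 : ∀ s ∈ Icc (0:ℝ) L, HasDerivAt (fun t => v t 0) (k s * (-(v s 1))) s := by
    intro s hs
    have := (EuclideanSpace.proj (0 : Fin 2)).hasFDerivAt.comp_hasDerivAt s (hcurv s hs)
    simp [Function.comp, rot, e2] at this
    rw [mul_neg]
    exact this
  have hv1 : ∀ s ∈ Icc (0:ℝ) L, HasDerivAt (fun t => v t 1) (k s * (v s 0)) s := by
    intro s hs
    have := (EuclideanSpace.proj (1 : Fin 2)).hasFDerivAt.comp_hasDerivAt s (hcurv s hs)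
    simp [Function.comp, rot, e2] at this
    exact this
  -- the symmetric comparison fields
  set d0 : ℝ → ℝ := fun s => v s 0 - v (L - s) 0 with hd0def
  set d1 : ℝ → ℝ := fun s => v s 1 + v (L - s) 1 with hd1def
  set p0 : ℝ → ℝ := fun s => v s 0 + v (L - s) 0 with hp0def
  set p1 : ℝ → ℝ := fun s => v s 1 - v (L - s) 1 with hp1def
  have hLs : ∀ s : ℝ, HasDerivAt (fun t : ℝ => L - t) (-1) s := fun s =>
    (hasDerivAt_id s).const_sub L
  have hr0 : ∀ s ∈ Icc (0:ℝ) L,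
      HasDerivAt (fun t => v (L - t) 0) (k s * (v (L - s) 1)) s := by
    intro s hs
    have h := (hv0 (L - s) (hmem s hs)).comp s (hLs s)
    rw [ksym s hs] at h
    refine h.congr_deriv ?_
    ring
  have hr1 : ∀ s ∈ Icc (0:ℝ) L,
      HasDerivAt (fun t => v (L - t) 1) (-(k s * (v (L - s) 0))) s := by
    intro s hs
    have h := (hv1 (L - s) (hmem s hs)).comp s (hLs s)
    rw [ksym s hs] at h
    refine h.congr_deriv ?_
    ring
  have hd0' : ∀ s ∈ Icc (0:ℝ) L, HasDerivAt d0 (-(k s * d1 s)) s := by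
    intro s hs
    have h := (hv0 s hs).sub (hr0 s hs)
    refine h.congr_deriv ?_
    simp only [hd1def]
    ring
  have hd1' : ∀ s ∈ Icc (0:ℝ) L, HasDerivAt d1 (k s * d0 s) s := by
    intro s hs
    have h := (hv1 s hs).add (hr1 s hs)
    refine h.congr_deriv ?_
    simp only [hd0def]
    ring
  have hp0' : ∀ s ∈ Icc (0:ℝ) L, HasDerivAt p0 (-(k s * p1 s)) s := by
    intro s hs
    have h := (hv0 s hs).add (hr0 s hs)
    refine h.congr_deriv ?_
    simp only [hp1def]
    ring
  have hp1' : ∀ s ∈ Icc (0:ℝ) L, HasDerivAt p1 (k s * p0 s) s := by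
    intro s hs
    have h := (hv1 s hs).sub (hr1 s hs)
    refine h.congr_deriv ?_
    simp only [hp0def]
    ring
  -- constancy helper
  have const_of : ∀ F : ℝ → ℝ, (∀ s ∈ Icc (0:ℝ) L, HasDerivAt F 0 s) →
      ∀ s ∈ Icc (0:ℝ) L, F s = F 0 := by
    intro F hF
    exact constant_of_has_deriv_right_zero
      (fun s hs => (hF s hs).continuousAt.continuousWithinAt)
      (fun s hs => ((hF s ⟨hs.1, hs.2.le⟩).hasDerivWithinAt))
  -- |d|² is constant
  have hN : ∀ s ∈ Icc (0:ℝ) L, d0 s ^ 2 + d1 s ^ 2 = d0 0 ^ 2 + d1 0 ^ 2 := by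
    apply const_of
    intro s hs
    have h := ((hd0' s hs).pow 2).add ((hd1' s hs).pow 2)
    refine h.congr_deriv ?_
    ring
  -- ⟪p, rot d⟫ is constant
  have hH : ∀ s ∈ Icc (0:ℝ) L,
      p0 s * (-(d1 s)) + p1 s * d0 s = p0 0 * (-(d1 0)) + p1 0 * d0 0 := by
    apply const_of
    intro s hs
    have h := (((hp0' s hs).mul ((hd1' s hs).neg)).add ((hp1' s hs).mul (hd0' s hs)))
    refine h.congr_deriv ?_
    simp only [Pi.neg_apply]
    ring
  -- ⟪p, d⟫ vanishes
  have hg : ∀ s ∈ Icc (0:ℝ) L, p0 s * d0 s + p1 s * d1 s = 0 := by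
    intro s hs
    have h1 := hunit2 s hs
    have h2 := hunit2 _ (hmem s hs)
    simp only [hp0def, hp1def, hd0def, hd1def]
    linear_combination h1 - h2
  -- integrals of the tangent components
  have hvcont0 : ContinuousOn (fun t => v t 0) (Icc (0:ℝ) L) := fun s hs =>
    (hv0 s hs).continuousAt.continuousWithinAt
  have hvcont1 : ContinuousOn (fun t => v t 1) (Icc (0:ℝ) L) := fun s hs =>
    (hv1 s hs).continuousAt.continuousWithinAt
  have huIcc : uIcc (0:ℝ) L = Icc (0:ℝ) L := uIcc_of_le hL.le
  have hint0 : (∫ t in (0:ℝ)..L, v t 0) = l := by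
    rw [intervalIntegral.integral_eq_sub_of_hasDerivAt
      (f := fun t => γ t 0) (fun t ht => hγd0 t (huIcc ▸ ht))
      ((hvcont0.mono huIcc.le).intervalIntegrable)]
    rw [hstart, hend]
    norm_num [e2]
  have hint1 : (∫ t in (0:ℝ)..L, v t 1) = 0 := by
    rw [intervalIntegral.integral_eq_sub_of_hasDerivAt
      (f := fun t => γ t 1) (fun t ht => hγd1 t (huIcc ▸ ht))
      ((hvcont1.mono huIcc.le).intervalIntegrable)]
    rw [hstart, hend]
    norm_num [e2]
  have hrev : ∀ i : Fin 2, (∫ t in (0:ℝ)..L, v (L - t) i) = ∫ t in (0:ℝ)..L, v t i := by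
    intro i
    have := intervalIntegral.integral_comp_sub_left (a := (0:ℝ)) (b := L)
      (fun t => v t i) L
    simpa using this
  have hrcont0 : ContinuousOn (fun t => v (L - t) 0) (Icc (0:ℝ) L) := fun s hs =>
    (hr0 s hs).continuousAt.continuousWithinAt
  have hrcont1 : ContinuousOn (fun t => v (L - t) 1) (Icc (0:ℝ) L) := fun s hs =>
    (hr1 s hs).continuousAt.continuousWithinAt
  have hintp0 : (∫ t in (0:ℝ)..L, p0 t) = 2 * l := by
    simp only [hp0def]
    rw [intervalIntegral.integral_add ((hvcont0.mono huIcc.le).intervalIntegrable)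
      ((hrcont0.mono huIcc.le).intervalIntegrable), hrev 0, hint0]
    ring
  have hintd1 : (∫ t in (0:ℝ)..L, d1 t) = 0 := by
    simp only [hd1def]
    rw [intervalIntegral.integral_add ((hvcont1.mono huIcc.le).intervalIntegrable)
      ((hrcont1.mono huIcc.le).intervalIntegrable), hrev 1, hint1]
    ring
  -- the key claim : d ≡ 0
  have hN0 : d0 0 ^ 2 + d1 0 ^ 2 = 0 := by
    by_contra hc
    have hc2pos : 0 < d0 0 ^ 2 + d1 0 ^ 2 := lt_of_le_of_ne (by positivity) (Ne.symm hc)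
    have hp0eq : ∀ s ∈ Icc (0:ℝ) L, p0 s =
        -((p0 0 * (-(d1 0)) + p1 0 * d0 0) / (d0 0 ^ 2 + d1 0 ^ 2)) * d1 s := by
      intro s hs
      have e1 := hg s hs
      have e2 := hH s hs
      have e3 := hN s hs
      have key : p0 s * (d0 0 ^ 2 + d1 0 ^ 2) =
          -((p0 0 * (-(d1 0)) + p1 0 * d0 0) * d1 s) := by
        linear_combination d0 s * e1 - d1 s * e2 - p0 s * e3
      field_simp
      linarith [key]
    have : (∫ t in (0:ℝ)..L, p0 t) =
        -((p0 0 * (-(d1 0)) + p1 0 * d0 0) / (d0 0 ^ 2 + d1 0 ^ 2)) * ∫ t in (0:ℝ)..L, d1 t := by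
      rw [← intervalIntegral.integral_const_mul]
      apply intervalIntegral.integral_congr
      intro s hs
      exact hp0eq s (huIcc ▸ hs)
    rw [hintp0, hintd1] at this
    simp at this
    exact hl this
  have hd0zero : ∀ s ∈ Icc (0:ℝ) L, d0 s = 0 := by
    intro s hs
    have h := hN s hs
    rw [hN0] at h
    nlinarith [sq_nonneg (d0 s), sq_nonneg (d1 s)]
  have hd1zero : ∀ s ∈ Icc (0:ℝ) L, d1 s = 0 := by
    intro s hs
    have h := hN s hs
    rw [hN0] at h
    nlinarith [sq_nonneg (d0 s), sq_nonneg (d1 s)]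
  -- integrate the symmetry of the tangent
  have hX : ∀ s ∈ Icc (0:ℝ) L, γ (L - s) 0 + γ s 0 = γ L 0 + γ 0 0 := by
    have := const_of (fun s => γ (L - s) 0 + γ s 0) ?_
    · intro s hs
      have h := this s hs
      simpa using h
    · intro s hs
      have h1 := (hγd0 (L - s) (hmem s hs)).comp s (hLs s)
      have h := h1.add (hγd0 s hs)
      refine h.congr_deriv ?_
      have := hd0zero s hs
      simp only [hd0def] at this
      linarith
  have hY : ∀ s ∈ Icc (0:ℝ) L, γ (L - s) 1 - γ s 1 = γ L 1 - γ 0 1 := by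
    have := const_of (fun s => γ (L - s) 1 - γ s 1) ?_
    · intro s hs
      have h := this s hs
      simpa using h
    · intro s hs
      have h1 := (hγd1 (L - s) (hmem s hs)).comp s (hLs s)
      have h := h1.sub (hγd1 s hs)
      refine h.congr_deriv ?_
      have := hd1zero s hs
      simp only [hd1def] at this
      linarith
  intro s hs
  have hx := hX s hs
  have hy := hY s hs
  rw [hstart, hend] at hx hy
  constructor
  · rw [hx]; norm_num [e2]
  · have : γ L 1 - γ 0 1 = 0 := by rw [hstart, hend]; norm_num [e2]
    rw [hstart, hend] at this
    linarith [hy, this]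
end
end

section
/- Assume every global minimizer of the bending energy B in A_c is of class C²([0,L];ℝ³). Let γ ∈ A_c be of class C². If γ has a self-intersection, i.e. there are 0 ≤ s₁ < s₂ ≤ L with s₂ − s₁ < L and γ(s₁) = γ(s₂), such that γ''(s₁) does not lie in the linear span of {γ'(s₁), γ'(s₂)} (or the same holds with γ''(s₂)), then γ is not a global minimizer of B in A_c. -/
open MeasureTheory Set Filter RealInnerProductSpace

noncomputable section

/-- Euclidean 3-space. -/
abbrev R3 := EuclideanSpace ℝ (Fin 3)

/-- The point of `ℝ³` with coordinates `(a, b, c)`. -/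
def e3 (a b c : ℝ) : R3 := (WithLp.equiv 2 (Fin 3 → ℝ)).symm ![a, b, c]

/-- `γ` (restricted to `[0,L]`) is an arclength parameterized `W^{2,2}` space curve:
`γ` is `C¹` and unit-speed on `[0,L]`, `γ'` is absolutely continuous (it is recovered from
its a.e. derivative by integration), and the second derivative lies in `L²(0,L)`. -/
structure ArcCurve3 (L : ℝ) (γ : ℝ → R3) : Prop where
  c1 : ContDiffOn ℝ 1 γ (Icc 0 L)
  unit : ∀ s ∈ Icc (0:ℝ) L, ‖deriv γ s‖ = 1
  ac : ∀ a ∈ Icc (0:ℝ) L, ∀ b ∈ Icc (0:ℝ) L,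
    deriv γ b - deriv γ a = ∫ s in a..b, deriv (deriv γ) s
  l2 : MemLp (fun s => deriv (deriv γ) s) 2 (volume.restrict (Icc 0 L))

/-- The bending energy `B(γ) = ∫₀^L |γ''|² ds`. -/
def Ben (L : ℝ) (γ : ℝ → R3) : ℝ := ∫ s in Icc (0:ℝ) L, ‖deriv (deriv γ) s‖ ^ 2

/-- The `W^{2,2}`-distance between two curves on `[0,L]`. -/
def W22Dist (L : ℝ) (γ ξ : ℝ → R3) : ℝ :=
  Real.sqrt (∫ s in Icc (0:ℝ) L, (‖γ s - ξ s‖ ^ 2 + ‖deriv γ s - deriv ξ s‖ ^ 2 +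
    ‖deriv (deriv γ) s - deriv (deriv ξ) s‖ ^ 2))

/-- The admissible class `A_c` with clamped boundary conditions in `ℝ³`. -/
def Adm3 (L : ℝ) (P0 P1 V0 V1 : R3) (γ : ℝ → R3) : Prop :=
  ArcCurve3 L γ ∧ γ 0 = P0 ∧ γ L = P1 ∧ deriv γ 0 = V0 ∧ deriv γ L = V1

/-- Global minimizer of the bending energy in `A_c`. -/
def IsGlobalMin3 (L : ℝ) (P0 P1 V0 V1 : R3) (γ : ℝ → R3) : Prop :=
  Adm3 L P0 P1 V0 V1 γ ∧ ∀ ξ, Adm3 L P0 P1 V0 V1 ξ → Ben L γ ≤ Ben L ξ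

/-- Local minimizer of the bending energy in `A_c` (w.r.t. the `W^{2,2}` topology). -/
def IsLocalMin3 (L : ℝ) (P0 P1 V0 V1 : R3) (γ : ℝ → R3) : Prop :=
  Adm3 L P0 P1 V0 V1 γ ∧
    ∃ δ > 0, ∀ ξ, Adm3 L P0 P1 V0 V1 ξ → W22Dist L γ ξ < δ → Ben L γ ≤ Ben L ξ

/-! ### Auxiliary lemmas -/

lemma diffAt_of_unit {γ : ℝ → R3} {s : ℝ} (h : ‖deriv γ s‖ = 1) : DifferentiableAt ℝ γ s := by
  by_contra hc
  rw [deriv_zero_of_not_differentiableAt hc] at h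
  simp at h

lemma hasDerivAt_deriv_interior {γ : ℝ → R3} {L t : ℝ} (hC2 : ContDiffOn ℝ 2 γ (Icc 0 L))
    (ht : t ∈ Ioo 0 L) : HasDerivAt (deriv γ) (deriv (deriv γ) t) t := by
  have h1 : ContDiffAt ℝ 2 γ t := hC2.contDiffAt (Icc_mem_nhds ht.1 ht.2)
  obtain ⟨u, hu, hcu⟩ := h1.contDiffOn le_rfl (by simp)
  have htu : t ∈ interior u := mem_interior_iff_mem_nhds.mpr hu
  have h2 : ContDiffOn ℝ 1 (deriv γ) (interior u) :=
    (hcu.mono interior_subset).deriv_of_isOpen isOpen_interior (by norm_num)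
  exact ((h2.differentiableOn one_ne_zero).differentiableAt
    (isOpen_interior.mem_nhds htu)).hasDerivAt

lemma contOn_deriv {γ : ℝ → R3} {L : ℝ} (hL : 0 < L) (h1 : ContDiffOn ℝ 1 γ (Icc 0 L))
    (hd : ∀ s ∈ Icc (0:ℝ) L, DifferentiableAt ℝ γ s) : ContinuousOn (deriv γ) (Icc 0 L) := by
  have uD := uniqueDiffOn_Icc hL
  exact (h1.continuousOn_derivWithin uD le_rfl).congr fun s hs =>
    ((hd s hs).hasDerivAt.hasDerivWithinAt.derivWithin (uD s hs)).symm

lemma tendsto_second_deriv {γ : ℝ → R3} {L : ℝ} (hL : 0 < L)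
    (hC2 : ContDiffOn ℝ 2 γ (Icc 0 L))
    (hdγ : ∀ s ∈ Icc (0:ℝ) L, DifferentiableAt ℝ γ s) {p : ℝ}
    (hp : p ∈ Icc (0:ℝ) L) (hd : DifferentiableAt ℝ (deriv γ) p) :
    Tendsto (deriv (deriv γ)) (nhdsWithin p (Ioo 0 L)) (nhds (deriv (deriv γ) p)) := by
  have uD := uniqueDiffOn_Icc hL
  set D := derivWithin (derivWithin γ (Icc 0 L)) (Icc 0 L) with hD
  have hEq : EqOn (derivWithin γ (Icc 0 L)) (deriv γ) (Icc 0 L) := fun s hs =>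
    (hdγ s hs).hasDerivAt.hasDerivWithinAt.derivWithin (uD s hs)
  have hcontD : ContinuousOn D (Icc 0 L) :=
    (hC2.derivWithin uD (by norm_num)).continuousOn_derivWithin uD le_rfl
  have hDval : ∀ s ∈ Icc (0:ℝ) L, DifferentiableAt ℝ (deriv γ) s →
      D s = deriv (deriv γ) s := by
    intro s hs hds
    have h0 : D s = derivWithin (deriv γ) (Icc 0 L) s := derivWithin_congr hEq (hEq hs)
    rw [h0]
    exact hds.hasDerivAt.hasDerivWithinAt.derivWithin (uD s hs)
  have hint : ∀ s ∈ Ioo (0:ℝ) L, D s = deriv (deriv γ) s := fun s hs =>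
    hDval s (Ioo_subset_Icc_self hs) (hasDerivAt_deriv_interior hC2 hs).differentiableAt
  have h1 : Tendsto D (nhdsWithin p (Ioo 0 L)) (nhds (D p)) :=
    (hcontD.continuousWithinAt hp).mono Ioo_subset_Icc_self
  rw [hDval p hp hd] at h1
  exact Tendsto.congr' (Filter.eventuallyEq_of_mem self_mem_nhdsWithin hint) h1

lemma c2_jump {L : ℝ} (hL : 0 < L) (ξ g u v : ℝ → R3) {t a b : ℝ} (hat : a < t) (htb : t < b)
    (ha : 0 ≤ a) (hbL : b ≤ L)
    (hg : ∀ s ∈ Icc (0:ℝ) L, HasDerivAt ξ (g s) s)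
    (hC2 : ContDiffOn ℝ 2 ξ (Icc 0 L))
    (hu : ∀ s ∈ Ioo a t, HasDerivAt g (u s) s) (hv : ∀ s ∈ Ioo t b, HasDerivAt g (v s) s)
    {A B : R3} (hA : Tendsto u (nhdsWithin t (Ioo a t)) (nhds A))
    (hB : Tendsto v (nhdsWithin t (Ioo t b)) (nhds B)) : A = B := by
  have uD := uniqueDiffOn_Icc hL
  have htIcc : t ∈ Icc (0:ℝ) L := ⟨ha.trans hat.le, htb.le.trans hbL⟩
  set D := derivWithin (derivWithin ξ (Icc 0 L)) (Icc 0 L) with hD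
  have hcontD : ContinuousOn D (Icc 0 L) :=
    (hC2.derivWithin uD (by norm_num)).continuousOn_derivWithin uD le_rfl
  have hDg : EqOn (derivWithin ξ (Icc 0 L)) g (Icc 0 L) := fun s hs =>
    (hg s hs).hasDerivWithinAt.derivWithin (uD s hs)
  have hsub1 : Ioo a t ⊆ Icc (0:ℝ) L := fun s hs =>
    ⟨ha.trans hs.1.le, (hs.2.trans htb).le.trans hbL⟩
  have hsub2 : Ioo t b ⊆ Icc (0:ℝ) L := fun s hs =>
    ⟨ha.trans (hat.trans hs.1).le, hs.2.le.trans hbL⟩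
  have hDu : ∀ s ∈ Ioo a t, D s = u s := by
    intro s hs
    have h0 : D s = derivWithin g (Icc 0 L) s := derivWithin_congr hDg (hDg (hsub1 hs))
    rw [h0]
    exact (hu s hs).hasDerivWithinAt.derivWithin (uD s (hsub1 hs))
  have hDv : ∀ s ∈ Ioo t b, D s = v s := by
    intro s hs
    have h0 : D s = derivWithin g (Icc 0 L) s := derivWithin_congr hDg (hDg (hsub2 hs))
    rw [h0]
    exact (hv s hs).hasDerivWithinAt.derivWithin (uD s (hsub2 hs))
  have hne1 : (nhdsWithin t (Ioo a t)).NeBot := by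
    rw [← mem_closure_iff_nhdsWithin_neBot, closure_Ioo hat.ne]
    exact ⟨hat.le, le_rfl⟩
  have hne2 : (nhdsWithin t (Ioo t b)).NeBot := by
    rw [← mem_closure_iff_nhdsWithin_neBot, closure_Ioo htb.ne]
    exact ⟨le_rfl, htb.le⟩
  have h1 : Tendsto u (nhdsWithin t (Ioo a t)) (nhds (D t)) :=
    Tendsto.congr' (Filter.eventuallyEq_of_mem self_mem_nhdsWithin hDu)
      ((hcontD.continuousWithinAt htIcc).mono hsub1)
  have h2 : Tendsto v (nhdsWithin t (Ioo t b)) (nhds (D t)) :=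
    Tendsto.congr' (Filter.eventuallyEq_of_mem self_mem_nhdsWithin hDv)
      ((hcontD.continuousWithinAt htIcc).mono hsub2)
  have e1 : A = D t := tendsto_nhds_unique hA h1
  have e2 : B = D t := tendsto_nhds_unique hB h2
  rw [e1, e2]

lemma exists_O {T₁ T₂ : R3} (h1 : ‖T₁‖ = 1) (h2 : ‖T₂‖ = 1) :
    ∃ O : R3 ≃ₗᵢ[ℝ] R3, O T₁ = -T₂ ∧ O T₂ = -T₁ ∧ (∀ x, O (O x) = x) ∧
      ∀ x ∈ Submodule.span ℝ {T₁, T₂}, O x ∈ Submodule.span ℝ {T₁, T₂} := by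
  set K : Submodule ℝ R3 := (Submodule.span ℝ {T₁ - T₂})ᗮ with hK
  set σ : R3 ≃ₗᵢ[ℝ] R3 := Submodule.reflection K with hσ
  have hu : T₁ + T₂ ∈ K := by
    rw [hK, Submodule.mem_orthogonal_singleton_iff_inner_right]
    have e1 : ⟪T₁, T₁⟫ = 1 := by
      rw [real_inner_self_eq_norm_sq, h1]; norm_num
    have e2 : ⟪T₂, T₂⟫ = 1 := by
      rw [real_inner_self_eq_norm_sq, h2]; norm_num
    have e3 : ⟪T₂, T₁⟫ = ⟪T₁, T₂⟫ := real_inner_comm _ _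
    simp only [inner_sub_left, inner_add_right]
    rw [e1, e2, e3]; ring
  have hv : T₁ - T₂ ∈ Kᗮ :=
    (Submodule.span ℝ {T₁ - T₂}).le_orthogonal_orthogonal (Submodule.mem_span_singleton_self _)
  have hσu : σ (T₁ + T₂) = T₁ + T₂ := Submodule.reflection_mem_subspace_eq_self hu
  have hσv : σ (T₁ - T₂) = -(T₁ - T₂) :=
    Submodule.reflection_mem_subspace_orthogonalComplement_eq_neg hv
  have hσ1 : σ T₁ = T₂ := by
    have hT : T₁ = (2:ℝ)⁻¹ • ((T₁ + T₂) + (T₁ - T₂)) := by module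
    rw [hT, _root_.map_smul, map_add, hσu, hσv]
    module
  have hσ2 : σ T₂ = T₁ := by
    have hT : T₂ = (2:ℝ)⁻¹ • ((T₁ + T₂) - (T₁ - T₂)) := by module
    rw [hT, _root_.map_smul, map_sub, hσu, hσv]
    module
  set O : R3 ≃ₗᵢ[ℝ] R3 := σ.trans (LinearIsometryEquiv.neg ℝ) with hOdef
  have hO : ∀ y, O y = -(σ y) := fun y => rfl
  have hOT1 : O T₁ = -T₂ := by rw [hO, hσ1]
  have hOT2 : O T₂ = -T₁ := by rw [hO, hσ2]
  refine ⟨O, hOT1, hOT2, ?_, ?_⟩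
  · intro x
    rw [hO, hO, map_neg, neg_neg]
    exact Submodule.reflection_reflection K x
  · intro x hx
    have hle : Submodule.span ℝ {T₁, T₂} ≤
        Submodule.comap (O.toLinearEquiv : R3 →ₗ[ℝ] R3) (Submodule.span ℝ {T₁, T₂}) := by
      rw [Submodule.span_le]
      rintro y (rfl | rfl)
      · simp only [SetLike.mem_coe, Submodule.mem_comap]
        have hy : (O.toLinearEquiv : R3 →ₗ[ℝ] R3) y = -T₂ := hOT1
        rw [hy]
        exact neg_mem (Submodule.subset_span (by simp))
      · simp only [SetLike.mem_coe, Submodule.mem_comap]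
        have hy : (O.toLinearEquiv : R3 →ₗ[ℝ] R3) y = -T₁ := hOT2
        rw [hy]
        exact neg_mem (Submodule.subset_span (by simp))
    exact hle hx

/-- The reflected/reversed-loop comparison curve construction. -/
lemma core_construction (L : ℝ) (hL : 0 < L) (P0 P1 V0 V1 : R3)
    (γ : ℝ → R3) (hγ : Adm3 L P0 P1 V0 V1 γ) (hC2 : ContDiffOn ℝ 2 γ (Icc 0 L))
    (s₁ s₂ : ℝ) (hs₁0 : 0 ≤ s₁) (hs₁₂ : s₁ < s₂) (hs₂L : s₂ ≤ L)
    (hself : γ s₁ = γ s₂)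
    (U : R3 ≃ₗᵢ[ℝ] R3) (ε m : ℝ)
    (hcase : (ε = 1 ∧ m = 0) ∨ (ε = -1 ∧ m = s₁ + s₂))
    (hU1 : ε • U (deriv γ (ε * s₁ + m)) = deriv γ s₁)
    (hU2 : ε • U (deriv γ (ε * s₂ + m)) = deriv γ s₂)
    (hmin : IsGlobalMin3 L P0 P1 V0 V1 γ)
    (H : ∀ ζ, IsGlobalMin3 L P0 P1 V0 V1 ζ → ContDiffOn ℝ 2 ζ (Icc 0 L)) :
    (0 < s₁ → DifferentiableAt ℝ (deriv γ) (ε * s₁ + m) →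
      U (deriv (deriv γ) (ε * s₁ + m)) = deriv (deriv γ) s₁) ∧
    (s₂ < L → DifferentiableAt ℝ (deriv γ) (ε * s₂ + m) →
      U (deriv (deriv γ) (ε * s₂ + m)) = deriv (deriv γ) s₂) := by
  have uD := uniqueDiffOn_Icc hL
  set τ : ℝ → ℝ := fun s => ε * s + m with hτdef
  set c : R3 := γ s₁ with hcdef
  set ξ : ℝ → R3 := fun s => if s ∈ Icc s₁ s₂ then c + U (γ (τ s) - c) else γ s with hξdef
  set gg : ℝ → R3 := fun s => if s ∈ Icc s₁ s₂ then ε • U (deriv γ (τ s)) else deriv γ s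
    with hggdef
  set hh : ℝ → R3 := fun s => if s ∈ Icc s₁ s₂ then U (deriv (deriv γ) (τ s))
    else deriv (deriv γ) s with hhhdef
  -- basic facts
  have hε0 : ε ≠ 0 := by rcases hcase with ⟨he, _⟩ | ⟨he, _⟩ <;> rw [he] <;> norm_num
  have hεsq : ε * ε = 1 := by rcases hcase with ⟨he, _⟩ | ⟨he, _⟩ <;> rw [he] <;> norm_num
  have hεabs : |ε| = 1 := by rcases hcase with ⟨he, _⟩ | ⟨he, _⟩ <;> rw [he] <;> norm_num
  have hεinv : ε⁻¹ = ε := by rcases hcase with ⟨he, _⟩ | ⟨he, _⟩ <;> rw [he] <;> norm_num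
  have hsub : Icc s₁ s₂ ⊆ Icc (0:ℝ) L := Icc_subset_Icc hs₁0 hs₂L
  have hsubo : Ioo s₁ s₂ ⊆ Ioo (0:ℝ) L := Ioo_subset_Ioo hs₁0 hs₂L
  have hs₁mem : s₁ ∈ Icc (0:ℝ) L := ⟨hs₁0, hs₁₂.le.trans hs₂L⟩
  have hs₂mem : s₂ ∈ Icc (0:ℝ) L := ⟨hs₁0.trans hs₁₂.le, hs₂L⟩
  have hτIcc : ∀ s ∈ Icc s₁ s₂, τ s ∈ Icc s₁ s₂ := by
    intro s hs
    rcases hcase with ⟨he, hm⟩ | ⟨he, hm⟩ <;> rw [hτdef] <;> subst he <;> subst hm <;>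
      simp only [mem_Icc] at hs ⊢ <;> constructor <;> linarith [hs.1, hs.2]
  have hτIoo : ∀ s ∈ Ioo s₁ s₂, τ s ∈ Ioo s₁ s₂ := by
    intro s hs
    rcases hcase with ⟨he, hm⟩ | ⟨he, hm⟩ <;> rw [hτdef] <;> subst he <;> subst hm <;>
      simp only [mem_Ioo] at hs ⊢ <;> constructor <;> linarith [hs.1, hs.2]
  have hτs₁ : γ (τ s₁) = c := by
    rcases hcase with ⟨he, hm⟩ | ⟨he, hm⟩ <;> subst he <;> subst hm <;> simp only [hτdef]
    · rw [show (1:ℝ) * s₁ + 0 = s₁ from by ring, hcdef]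
    · rw [show (-1:ℝ) * s₁ + (s₁ + s₂) = s₂ from by ring, ← hself]
  have hτs₂ : γ (τ s₂) = c := by
    rcases hcase with ⟨he, hm⟩ | ⟨he, hm⟩ <;> subst he <;> subst hm <;> simp only [hτdef]
    · rw [show (1:ℝ) * s₂ + 0 = s₂ from by ring, ← hself]
    · rw [show (-1:ℝ) * s₂ + (s₁ + s₂) = s₁ from by ring, hcdef]
  have hτmem₁ : τ s₁ ∈ Icc (0:ℝ) L := hsub (hτIcc s₁ (left_mem_Icc.mpr hs₁₂.le))
  have hτmem₂ : τ s₂ ∈ Icc (0:ℝ) L := hsub (hτIcc s₂ (right_mem_Icc.mpr hs₁₂.le))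
  have hτcont : Continuous τ := by
    rw [hτdef]; exact (continuous_const.mul continuous_id).add continuous_const
  have hτmeas : Measurable τ := hτcont.measurable
  have hτd : ∀ t : ℝ, HasDerivAt τ ε t := by
    intro t
    rw [hτdef]
    simpa using ((hasDerivAt_id t).const_mul ε).add_const m
  -- differentiability of γ on [0, L]
  have hdiffγ : ∀ s ∈ Icc (0:ℝ) L, DifferentiableAt ℝ γ s := fun s hs =>
    diffAt_of_unit (hγ.1.unit s hs)
  have hγd : ∀ s ∈ Icc (0:ℝ) L, HasDerivAt γ (deriv γ s) s := fun s hs =>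
    (hdiffγ s hs).hasDerivAt
  -- the chain rule for the modified piece
  have hchain : ∀ t : ℝ, τ t ∈ Icc (0:ℝ) L →
      HasDerivAt (fun s => c + U (γ (τ s) - c)) (ε • U (deriv γ (τ t))) t := by
    intro t ht
    have h3 : HasDerivAt (fun s => γ (τ s)) (ε • deriv γ (τ t)) t := by
      have := (hγd (τ t) ht).scomp t (hτd t)
      exact this
    have h5 := U.toLinearIsometry.toContinuousLinearMap.hasFDerivAt.comp_hasDerivAt t
      (h3.sub_const c)
    have h6 := h5.const_add c
    simpa [LinearIsometry.coe_toContinuousLinearMap, LinearIsometryEquiv.coe_toLinearIsometry,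
      _root_.map_smul] using h6
  have hchain2 : ∀ t : ℝ, τ t ∈ Ioo (0:ℝ) L →
      HasDerivAt (fun s => ε • U (deriv γ (τ s))) (U (deriv (deriv γ) (τ t))) t := by
    intro t ht
    have h3 : HasDerivAt (fun s => deriv γ (τ s)) (ε • deriv (deriv γ) (τ t)) t := by
      have := (hasDerivAt_deriv_interior hC2 ht).scomp t (hτd t)
      exact this
    have h5 := U.toLinearIsometry.toContinuousLinearMap.hasFDerivAt.comp_hasDerivAt t h3
    have h6 := h5.const_smul ε
    simp only [LinearIsometry.coe_toContinuousLinearMap,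
      LinearIsometryEquiv.coe_toLinearIsometry, _root_.map_smul, smul_smul, hεsq,
      one_smul] at h6
    exact h6
  -- ξ agrees with γ away from the loop
  have hξout : ∀ s, s ∉ Icc s₁ s₂ → ξ s = γ s := by
    intro s hs; rw [hξdef]; simp only [if_neg hs]
  have hξin : ∀ s, s ∈ Icc s₁ s₂ → ξ s = c + U (γ (τ s) - c) := by
    intro s hs; rw [hξdef]; simp only [if_pos hs]
  have hggin : ∀ s, s ∈ Icc s₁ s₂ → gg s = ε • U (deriv γ (τ s)) := by
    intro s hs; rw [hggdef]; simp only [if_pos hs]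
  have hggout : ∀ s, s ∉ Icc s₁ s₂ → gg s = deriv γ s := by
    intro s hs; rw [hggdef]; simp only [if_neg hs]
  have hhhin : ∀ s, s ∈ Icc s₁ s₂ → hh s = U (deriv (deriv γ) (τ s)) := by
    intro s hs; rw [hhhdef]; simp only [if_pos hs]
  have hhhout : ∀ s, s ∉ Icc s₁ s₂ → hh s = deriv (deriv γ) s := by
    intro s hs; rw [hhhdef]; simp only [if_neg hs]
  have hggs₁ : gg s₁ = deriv γ s₁ := by
    rw [hggin s₁ (left_mem_Icc.mpr hs₁₂.le)]; exact hU1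
  have hggs₂ : gg s₂ = deriv γ s₂ := by
    rw [hggin s₂ (right_mem_Icc.mpr hs₁₂.le)]; exact hU2
  have hggEq1 : EqOn gg (deriv γ) (Icc 0 s₁) := by
    intro s hs
    rcases eq_or_lt_of_le hs.2 with h | h
    · rw [h]; exact hggs₁
    · exact hggout s (fun hc => absurd hc.1 (not_le.mpr h))
  have hggEq3 : EqOn gg (deriv γ) (Icc s₂ L) := by
    intro s hs
    rcases eq_or_lt_of_le hs.1 with h | h
    · rw [← h]; exact hggs₂
    · exact hggout s (fun hc => absurd hc.2 (not_le.mpr h))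
  have hξeqγ₁ : ∀ s, s ≤ s₁ → ξ s = γ s := by
    intro s hs
    by_cases hmem : s ∈ Icc s₁ s₂
    · have : s = s₁ := le_antisymm hs hmem.1
      rw [this, hξin s₁ (left_mem_Icc.mpr hs₁₂.le), hτs₁]
      simp [hcdef]
    · exact hξout s hmem
  have hξeqγ₂ : ∀ s, s₂ ≤ s → ξ s = γ s := by
    intro s hs
    by_cases hmem : s ∈ Icc s₁ s₂
    · have : s = s₂ := le_antisymm hmem.2 hs
      rw [this, hξin s₂ (right_mem_Icc.mpr hs₁₂.le), hτs₂]
      simp [hself]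
    · exact hξout s hmem
  -- ξ has derivative gg everywhere on [0, L]
  have FhasXi : ∀ s ∈ Icc (0:ℝ) L, HasDerivAt ξ (gg s) s := by
    intro s hs
    rcases lt_trichotomy s s₁ with h1 | h1 | h1
    · -- s < s₁
      have hev : ξ =ᶠ[nhds s] γ := by
        filter_upwards [Iio_mem_nhds h1] with y hy
        exact hξout y (fun hc => absurd hc.1 (not_le.mpr hy))
      rw [hggout s (fun hc => absurd hc.1 (not_le.mpr h1))]
      exact (hev.hasDerivAt_iff).mpr (hγd s hs)
    · -- s = s₁
      subst h1
      have hleft : HasDerivWithinAt ξ (deriv γ s) (Iic s) s :=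
        ((hγd s hs).hasDerivWithinAt).congr (fun y hy => hξeqγ₁ y hy) (hξeqγ₁ s le_rfl)
      have hright : HasDerivWithinAt ξ (deriv γ s) (Ici s) s := by
        have hIccmem : Icc s s₂ ∈ nhdsWithin s (Ici s) :=
          inter_mem self_mem_nhdsWithin (mem_nhdsWithin_of_mem_nhds (Iic_mem_nhds hs₁₂))
        have hin : HasDerivWithinAt ξ (deriv γ s) (Icc s s₂) s := by
          have := (hchain s hτmem₁).hasDerivWithinAt (s := Icc s s₂)
          have h2 : HasDerivWithinAt ξ (ε • U (deriv γ (τ s))) (Icc s s₂) s :=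
            this.congr (fun y hy => hξin y hy) (hξin s (left_mem_Icc.mpr hs₁₂.le))
          rwa [hU1] at h2
        exact hin.mono_of_mem_nhdsWithin hIccmem
      rw [hggs₁]
      have := hleft.union hright
      rw [Iic_union_Ici] at this
      exact this.hasDerivAt (by simp)
    rcases lt_trichotomy s s₂ with h2 | h2 | h2
    · -- s₁ < s < s₂
      have hmem : s ∈ Ioo s₁ s₂ := ⟨h1, h2⟩
      have hev : ξ =ᶠ[nhds s] fun y => c + U (γ (τ y) - c) := by
        filter_upwards [isOpen_Ioo.mem_nhds hmem] with y hy
        exact hξin y (Ioo_subset_Icc_self hy)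
      rw [hggin s (Ioo_subset_Icc_self hmem)]
      exact (hev.hasDerivAt_iff).mpr (hchain s (hsub (hτIcc s (Ioo_subset_Icc_self hmem))))
    · -- s = s₂
      subst h2
      have hleft : HasDerivWithinAt ξ (deriv γ s) (Iic s) s := by
        have hIccmem : Icc s₁ s ∈ nhdsWithin s (Iic s) := by
          rw [show Icc s₁ s = Ici s₁ ∩ Iic s from Ici_inter_Iic.symm]
          exact inter_mem (mem_nhdsWithin_of_mem_nhds (Ici_mem_nhds h1)) self_mem_nhdsWithin
        have hin : HasDerivWithinAt ξ (deriv γ s) (Icc s₁ s) s := by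
          have := (hchain s hτmem₂).hasDerivWithinAt (s := Icc s₁ s)
          have h2 : HasDerivWithinAt ξ (ε • U (deriv γ (τ s))) (Icc s₁ s) s :=
            this.congr (fun y hy => hξin y hy) (hξin s (right_mem_Icc.mpr hs₁₂.le))
          rwa [hU2] at h2
        exact hin.mono_of_mem_nhdsWithin hIccmem
      have hright : HasDerivWithinAt ξ (deriv γ s) (Ici s) s :=
        ((hγd s hs).hasDerivWithinAt).congr (fun y hy => hξeqγ₂ y hy) (hξeqγ₂ s le_rfl)
      rw [hggs₂]
      have := hleft.union hright
      rw [Iic_union_Ici] at this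
      exact this.hasDerivAt (by simp)
    · -- s > s₂
      have hev : ξ =ᶠ[nhds s] γ := by
        filter_upwards [Ioi_mem_nhds h2] with y hy
        exact hξout y (fun hc => absurd hc.2 (not_le.mpr hy))
      rw [hggout s (fun hc => absurd hc.2 (not_le.mpr h2))]
      exact (hev.hasDerivAt_iff).mpr (hγd s hs)
  -- deriv ξ = gg everywhere
  have Fderiv : deriv ξ = gg := by
    funext s
    by_cases hs : s ∈ Icc (0:ℝ) L
    · exact (FhasXi s hs).deriv
    · rcases lt_trichotomy s s₁ with h1 | h1 | h1
      · have hev : ξ =ᶠ[nhds s] γ := by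
          filter_upwards [Iio_mem_nhds h1] with y hy
          exact hξout y (fun hc => absurd hc.1 (not_le.mpr hy))
        rw [hev.deriv_eq, hggout s (fun hc => absurd hc.1 (not_le.mpr h1))]
      · exact absurd (h1 ▸ hs₁mem) hs
      · have h2 : s₂ < s := by
          rcases not_and_or.mp (by rwa [mem_Icc] at hs) with h | h
          · exact absurd (hs₁0.trans h1.le) h
          · exact lt_of_le_of_lt hs₂L (not_le.mp h)
        have hev : ξ =ᶠ[nhds s] γ := by
          filter_upwards [Ioi_mem_nhds h2] with y hy
          exact hξout y (fun hc => absurd hc.2 (not_le.mpr hy))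
        rw [hev.deriv_eq, hggout s (fun hc => absurd hc.2 (not_le.mpr h2))]
  -- second derivative of ξ equals hh off {s₁, s₂}
  have FD2mid : ∀ s ∈ Ioo s₁ s₂, HasDerivAt gg (U (deriv (deriv γ) (τ s))) s := by
    intro s hmem
    have hev : gg =ᶠ[nhds s] fun y => ε • U (deriv γ (τ y)) := by
      filter_upwards [isOpen_Ioo.mem_nhds hmem] with y hy
      exact hggin y (Ioo_subset_Icc_self hy)
    exact (hev.hasDerivAt_iff).mpr (hchain2 s (hsubo (hτIoo s hmem)))
  have Fae : ∀ s, s ≠ s₁ → s ≠ s₂ → deriv gg s = hh s := by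
    intro s hne1 hne2
    rcases lt_trichotomy s s₁ with h1 | h1 | h1
    · have hev : gg =ᶠ[nhds s] deriv γ := by
        filter_upwards [Iio_mem_nhds h1] with y hy
        exact hggout y (fun hc => absurd hc.1 (not_le.mpr hy))
      rw [hev.deriv_eq, hhhout s (fun hc => absurd hc.1 (not_le.mpr h1))]
    · exact absurd h1 hne1
    rcases lt_trichotomy s s₂ with h2 | h2 | h2
    · rw [(FD2mid s ⟨h1, h2⟩).deriv, hhhin s (Ioo_subset_Icc_self ⟨h1, h2⟩)]
    · exact absurd h2 hne2
    · have hev : gg =ᶠ[nhds s] deriv γ := by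
        filter_upwards [Ioi_mem_nhds h2] with y hy
        exact hggout y (fun hc => absurd hc.2 (not_le.mpr hy))
      rw [hev.deriv_eq, hhhout s (fun hc => absurd hc.2 (not_le.mpr h2))]
  have Fae_meas : (fun s => deriv (deriv ξ) s) =ᶠ[ae (volume.restrict (Icc 0 L))] hh := by
    have hnull : (volume.restrict (Icc 0 L)) {s₁, s₂} = 0 :=
      le_antisymm (le_trans (Measure.restrict_le_self _)
        ((Set.countable_insert.mpr (countable_singleton s₂)).measure_zero volume).le) (by simp)
    rw [Filter.eventuallyEq_iff_exists_mem]
    refine ⟨({s₁, s₂} : Set ℝ)ᶜ, ?_, ?_⟩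
    · rw [mem_ae_iff, compl_compl]; exact hnull
    · intro s hs
      simp only [mem_compl_iff, mem_insert_iff, mem_singleton_iff, not_or] at hs
      rw [Fderiv]
      exact Fae s hs.1 hs.2
  -- measure-theoretic facts
  haveI : IsFiniteMeasure (volume.restrict (Icc (0:ℝ) L)) := by
    constructor
    rw [Measure.restrict_apply_univ]
    exact measure_Icc_lt_top
  have hMP : MeasurePreserving τ volume volume := by
    rcases hcase with ⟨he, hm⟩ | ⟨he, hm⟩ <;> subst he <;> subst hm
    · have : τ = id := by funext y; rw [hτdef]; simp
      rw [this]
      exact MeasurePreserving.id volume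
    · have : τ = fun y => (s₁ + s₂) - y := by funext y; rw [hτdef]; ring_nf
      rw [this]
      exact Measure.measurePreserving_sub_left volume (s₁ + s₂)
  have hpre : τ ⁻¹' (Icc s₁ s₂) = Icc s₁ s₂ := by
    ext y
    rcases hcase with ⟨he, hm⟩ | ⟨he, hm⟩ <;> subst he <;> subst hm <;>
      simp only [hτdef, mem_preimage, mem_Icc] <;> constructor <;>
      rintro ⟨hy1, hy2⟩ <;> constructor <;> linarith
  have M : Measure.map τ (volume.restrict (Icc s₁ s₂)) = volume.restrict (Icc s₁ s₂) := by
    calc Measure.map τ (volume.restrict (Icc s₁ s₂))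
        = Measure.map τ (volume.restrict (τ ⁻¹' (Icc s₁ s₂))) := by rw [hpre]
      _ = (Measure.map τ volume).restrict (Icc s₁ s₂) :=
          (Measure.restrict_map hτmeas measurableSet_Icc).symm
      _ = volume.restrict (Icc s₁ s₂) := by rw [hMP.map_eq]
  have hmem2γ : MemLp (fun s => deriv (deriv γ) s) 2 (volume.restrict (Icc s₁ s₂)) :=
    hγ.1.l2.mono_measure (Measure.restrict_mono hsub le_rfl)
  have hmemU : MemLp (fun u => U (deriv (deriv γ) u)) 2 (volume.restrict (Icc s₁ s₂)) := by
    refine MemLp.of_le hmem2γ (U.continuous.comp_aestronglyMeasurable hmem2γ.1) ?_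
    filter_upwards with u
    rw [U.norm_map]
  have hmemcomp : MemLp (fun s => U (deriv (deriv γ) (τ s))) 2
      (volume.restrict (Icc s₁ s₂)) := by
    have := (memLp_map_measure_iff (p := 2)
      (g := fun u => U (deriv (deriv γ) u)) (by rw [M]; exact hmemU.1)
      hτmeas.aemeasurable).mp (by rw [M]; exact hmemU)
    exact this
  have Fl2h : MemLp hh 2 (volume.restrict (Icc 0 L)) := by
    have hpiece1 : MemLp ((Icc s₁ s₂).indicator (fun s => U (deriv (deriv γ) (τ s)))) 2
        (volume.restrict (Icc 0 L)) := by
      rw [memLp_indicator_iff_restrict measurableSet_Icc,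
        Measure.restrict_restrict measurableSet_Icc, inter_eq_left.mpr hsub]
      exact hmemcomp
    have hpiece2 : MemLp ((Icc s₁ s₂)ᶜ.indicator (fun s => deriv (deriv γ) s)) 2
        (volume.restrict (Icc 0 L)) := by
      rw [memLp_indicator_iff_restrict measurableSet_Icc.compl,
        Measure.restrict_restrict measurableSet_Icc.compl]
      exact hγ.1.l2.mono_measure (Measure.restrict_mono inter_subset_right le_rfl)
    have hsum : hh = fun s => (Icc s₁ s₂).indicator (fun s => U (deriv (deriv γ) (τ s))) s
        + (Icc s₁ s₂)ᶜ.indicator (fun s => deriv (deriv γ) s) s := by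
      funext s
      by_cases hs : s ∈ Icc s₁ s₂
      · rw [hhhin s hs, indicator_of_mem hs, indicator_of_notMem (by simpa using hs)]
        simp
      · rw [hhhout s hs, indicator_of_notMem hs, indicator_of_mem (by simpa using hs)]
        simp
    rw [hsum]
    exact hpiece1.add hpiece2
  have Fh_int : IntegrableOn hh (Icc 0 L) volume := Fl2h.integrable (by norm_num)
  have hγ2_int : IntegrableOn (fun s => deriv (deriv γ) s) (Icc 0 L) volume :=
    hγ.1.l2.integrable (by norm_num)
  have FIntH : ∀ x ∈ Icc (0:ℝ) L, ∀ y ∈ Icc (0:ℝ) L, IntervalIntegrable hh volume x y := by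
    intro x hx y hy
    rw [intervalIntegrable_iff]
    exact Fh_int.mono_set ((uIoc_subset_uIcc).trans (uIcc_subset_Icc hx hy))
  have FInt : ∀ x ∈ Icc (0:ℝ) L, ∀ y ∈ Icc (0:ℝ) L,
      IntervalIntegrable (fun s => deriv (deriv γ) s) volume x y := by
    intro x hx y hy
    rw [intervalIntegrable_iff]
    exact hγ2_int.mono_set ((uIoc_subset_uIcc).trans (uIcc_subset_Icc hx hy))
  -- fundamental theorem of calculus pieces
  have FP1 : ∀ x ∈ Icc (0:ℝ) s₁, ∀ y ∈ Icc (0:ℝ) s₁, gg y - gg x = ∫ s in x..y, hh s := by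
    intro x hx y hy
    have hx' : x ∈ Icc (0:ℝ) L := Icc_subset_Icc le_rfl (hs₁₂.le.trans hs₂L) hx
    have hy' : y ∈ Icc (0:ℝ) L := Icc_subset_Icc le_rfl (hs₁₂.le.trans hs₂L) hy
    rw [hggEq1 hy, hggEq1 hx, hγ.1.ac x hx' y hy']
    refine intervalIntegral.integral_congr_ae ?_
    have hae : ∀ᵐ (s : ℝ) ∂volume, s ≠ s₁ := by
      rw [ae_iff]
      simpa using measure_singleton s₁
    filter_upwards [hae] with s hs hmem
    have hsu : s ∈ uIcc x y := uIoc_subset_uIcc hmem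
    have hle : s ≤ s₁ := (uIcc_subset_Icc hx hy hsu).2
    rw [hhhout s (fun hc => hs (le_antisymm hle hc.1))]
  have FP3 : ∀ x ∈ Icc s₂ L, ∀ y ∈ Icc s₂ L, gg y - gg x = ∫ s in x..y, hh s := by
    intro x hx y hy
    have hx' : x ∈ Icc (0:ℝ) L := Icc_subset_Icc (hs₁0.trans hs₁₂.le) le_rfl hx
    have hy' : y ∈ Icc (0:ℝ) L := Icc_subset_Icc (hs₁0.trans hs₁₂.le) le_rfl hy
    rw [hggEq3 hy, hggEq3 hx, hγ.1.ac x hx' y hy']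
    refine intervalIntegral.integral_congr_ae ?_
    have hae : ∀ᵐ (s : ℝ) ∂volume, s ≠ s₂ := by
      rw [ae_iff]
      simpa using measure_singleton s₂
    filter_upwards [hae] with s hs hmem
    have hsu : s ∈ uIcc x y := uIoc_subset_uIcc hmem
    have hge : s₂ ≤ s := (uIcc_subset_Icc hx hy hsu).1
    rw [hhhout s (fun hc => hs (le_antisymm hc.2 hge))]
  have FP2 : ∀ x ∈ Icc s₁ s₂, ∀ y ∈ Icc s₁ s₂, gg y - gg x = ∫ s in x..y, hh s := by
    intro x hx y hy
    have e1 : ∫ s in x..y, hh s = ∫ s in x..y, U (deriv (deriv γ) (τ s)) :=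
      intervalIntegral.integral_congr (fun s hs => hhhin s (uIcc_subset_Icc hx hy hs))
    have e2 : ∫ s in x..y, U (deriv (deriv γ) (τ s))
        = ε⁻¹ • ∫ u in (ε * x + m)..(ε * y + m), U (deriv (deriv γ) u) := by
      rw [hτdef]
      exact intervalIntegral.integral_comp_mul_add (fun u => U (deriv (deriv γ) u)) hε0 m
    have e3 : ∫ u in (ε * x + m)..(ε * y + m), U (deriv (deriv γ) u)
        = U (∫ u in (ε * x + m)..(ε * y + m), deriv (deriv γ) u) := by
      have hIi : IntervalIntegrable (fun s => deriv (deriv γ) s) volume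
          (ε * x + m) (ε * y + m) :=
        FInt _ (hsub (hτIcc x hx)) _ (hsub (hτIcc y hy))
      have := U.toLinearIsometry.toContinuousLinearMap.intervalIntegral_comp_comm hIi
      simpa [LinearIsometry.coe_toContinuousLinearMap,
        LinearIsometryEquiv.coe_toLinearIsometry] using this
    have e4 : ∫ u in (ε * x + m)..(ε * y + m), deriv (deriv γ) u
        = deriv γ (ε * y + m) - deriv γ (ε * x + m) :=
      (hγ.1.ac _ (hsub (hτIcc x hx)) _ (hsub (hτIcc y hy))).symm
    rw [e1, e2, e3, e4, hggin x hx, hggin y hy]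
    simp only [hτdef]
    rw [map_sub, smul_sub, hεinv]
  -- FTC for gg from the left endpoint
  have h0s₁ : (0:ℝ) ∈ Icc (0:ℝ) s₁ := ⟨le_rfl, hs₁0⟩
  have hs₁s₁ : s₁ ∈ Icc (0:ℝ) s₁ := ⟨hs₁0, le_rfl⟩
  have hs₁m : s₁ ∈ Icc s₁ s₂ := left_mem_Icc.mpr hs₁₂.le
  have hs₂m : s₂ ∈ Icc s₁ s₂ := right_mem_Icc.mpr hs₁₂.le
  have hs₂r : s₂ ∈ Icc s₂ L := left_mem_Icc.mpr hs₂L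
  have key : ∀ y ∈ Icc (0:ℝ) L, gg y - gg 0 = ∫ s in (0:ℝ)..y, hh s := by
    intro y hy
    have h0L : (0:ℝ) ∈ Icc (0:ℝ) L := ⟨le_rfl, hL.le⟩
    rcases le_or_gt y s₁ with h1 | h1
    · exact FP1 0 h0s₁ y ⟨hy.1, h1⟩
    rcases le_or_gt y s₂ with h2 | h2
    · have e1 := FP1 0 h0s₁ s₁ hs₁s₁
      have e2 := FP2 s₁ hs₁m y ⟨h1.le, h2⟩
      have hadd := intervalIntegral.integral_add_adjacent_intervals
        (FIntH 0 h0L s₁ hs₁mem) (FIntH s₁ hs₁mem y hy)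
      have : gg y - gg 0 = (gg s₁ - gg 0) + (gg y - gg s₁) := by abel
      rw [this, e1, e2, hadd]
    · have e1 := FP1 0 h0s₁ s₁ hs₁s₁
      have e2 := FP2 s₁ hs₁m s₂ hs₂m
      have e3 := FP3 s₂ hs₂r y ⟨h2.le, hy.2⟩
      have hadd1 := intervalIntegral.integral_add_adjacent_intervals
        (FIntH 0 h0L s₁ hs₁mem) (FIntH s₁ hs₁mem s₂ hs₂mem)
      have hadd2 := intervalIntegral.integral_add_adjacent_intervals
        (FIntH 0 h0L s₂ hs₂mem) (FIntH s₂ hs₂mem y hy)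
      have : gg y - gg 0 = ((gg s₁ - gg 0) + (gg s₂ - gg s₁)) + (gg y - gg s₂) := by abel
      rw [this, e1, e2, e3, hadd1, hadd2]
  have FTC : ∀ a ∈ Icc (0:ℝ) L, ∀ b ∈ Icc (0:ℝ) L, gg b - gg a = ∫ s in a..b, hh s := by
    intro a ha b hb
    have h0L : (0:ℝ) ∈ Icc (0:ℝ) L := ⟨le_rfl, hL.le⟩
    have : gg b - gg a = (gg b - gg 0) - (gg a - gg 0) := by abel
    rw [this, key b hb, key a ha]
    exact intervalIntegral.integral_interval_sub_left (FIntH 0 h0L b hb) (FIntH 0 h0L a ha)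
  -- the admissibility of ξ
  have hIcc3 : Icc (0:ℝ) L = (Icc 0 s₁ ∪ Icc s₁ s₂) ∪ Icc s₂ L := by
    rw [Icc_union_Icc_eq_Icc hs₁0 hs₁₂.le, Icc_union_Icc_eq_Icc (hs₁0.trans hs₁₂.le) hs₂L]
  have hcγ' : ContinuousOn (deriv γ) (Icc 0 L) := contOn_deriv hL hγ.1.c1 hdiffγ
  have hcontg : ContinuousOn gg (Icc 0 L) := by
    have p1 : ContinuousOn gg (Icc 0 s₁) :=
      (hcγ'.mono (Icc_subset_Icc le_rfl (hs₁₂.le.trans hs₂L))).congr hggEq1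
    have p3 : ContinuousOn gg (Icc s₂ L) :=
      (hcγ'.mono (Icc_subset_Icc (hs₁0.trans hs₁₂.le) le_rfl)).congr hggEq3
    have p2 : ContinuousOn gg (Icc s₁ s₂) := by
      have hin : ContinuousOn (fun s => ε • U (deriv γ (τ s))) (Icc s₁ s₂) := by
        refine ContinuousOn.const_smul ?_ ε
        exact U.continuous.comp_continuousOn
          (hcγ'.comp hτcont.continuousOn (fun s hs => hsub (hτIcc s hs)))
      exact hin.congr (fun s hs => hggin s hs)
    rw [hIcc3]
    intro x hx
    have cwa : ∀ (A : Set ℝ), IsClosed A → ContinuousOn gg A → ContinuousWithinAt gg A x := by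
      intro A hA hcA
      by_cases hxA : x ∈ A
      · exact hcA x hxA
      · exact continuousWithinAt_of_notMem_closure (by rwa [hA.closure_eq])
    refine (continuousWithinAt_union).mpr ⟨(continuousWithinAt_union).mpr ⟨?_, ?_⟩, ?_⟩
    · exact cwa _ isClosed_Icc p1
    · exact cwa _ isClosed_Icc p2
    · exact cwa _ isClosed_Icc p3
  have hc1ξ : ContDiffOn ℝ 1 ξ (Icc 0 L) := by
    have hgoal : ContDiffOn ℝ ((0:ℕ) + 1) ξ (Icc 0 L) := by
      rw [contDiffOn_succ_iff_derivWithin uD]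
      refine ⟨fun s hs => ((FhasXi s hs).differentiableAt).differentiableWithinAt, ?_, ?_⟩
      · intro h0
        exact absurd h0 (by norm_num)
      · exact contDiffOn_zero.mpr (hcontg.congr (fun s hs =>
          (FhasXi s hs).hasDerivWithinAt.derivWithin (uD s hs)))
    simpa using hgoal
  have hunitξ : ∀ s ∈ Icc (0:ℝ) L, ‖deriv ξ s‖ = 1 := by
    intro s hs
    rw [Fderiv]
    by_cases hmem : s ∈ Icc s₁ s₂
    · rw [hggin s hmem, norm_smul, U.norm_map, hγ.1.unit (τ s) (hsub (hτIcc s hmem))]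
      simp [Real.norm_eq_abs, hεabs]
    · rw [hggout s hmem]
      exact hγ.1.unit s hs
  have hacξ : ∀ a ∈ Icc (0:ℝ) L, ∀ b ∈ Icc (0:ℝ) L,
      deriv ξ b - deriv ξ a = ∫ s in a..b, deriv (deriv ξ) s := by
    intro a ha b hb
    rw [Fderiv, FTC a ha b hb]
    refine (intervalIntegral.integral_congr_ae ?_).symm
    have hae : ∀ᵐ (s : ℝ) ∂volume, s ∉ ({s₁, s₂} : Set ℝ) :=
      compl_mem_ae_iff.mpr
        ((countable_insert.mpr (countable_singleton s₂)).measure_zero volume)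
    filter_upwards [hae] with s hs _
    simp only [mem_insert_iff, mem_singleton_iff, not_or] at hs
    exact Fae s hs.1 hs.2
  have hl2ξ : MemLp (fun s => deriv (deriv ξ) s) 2 (volume.restrict (Icc 0 L)) :=
    MemLp.ae_eq Fae_meas.symm Fl2h
  have hξ0 : ξ 0 = P0 := by rw [hξeqγ₁ 0 hs₁0]; exact hγ.2.1
  have hξL : ξ L = P1 := by rw [hξeqγ₂ L hs₂L]; exact hγ.2.2.1
  have hdξ0 : deriv ξ 0 = V0 := by
    rw [Fderiv]
    have : gg 0 = deriv γ 0 := by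
      by_cases hmem : (0:ℝ) ∈ Icc s₁ s₂
      · have h0 : s₁ = 0 := le_antisymm hmem.1 hs₁0
        rw [← h0]; exact hggs₁
      · exact hggout 0 hmem
    rw [this]; exact hγ.2.2.2.1
  have hdξL : deriv ξ L = V1 := by
    rw [Fderiv]
    have : gg L = deriv γ L := by
      by_cases hmem : L ∈ Icc s₁ s₂
      · have h0 : s₂ = L := le_antisymm hs₂L hmem.2
        rw [← h0]; exact hggs₂
      · exact hggout L hmem
    rw [this]; exact hγ.2.2.2.2
  have hAdmξ : Adm3 L P0 P1 V0 V1 ξ := ⟨⟨hc1ξ, hunitξ, hacξ, hl2ξ⟩, hξ0, hξL, hdξ0, hdξL⟩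
  -- the bending energies agree
  have haeS1 : ∀ᵐ (s : ℝ) ∂volume, s ≠ s₁ := compl_mem_ae_iff.mpr (measure_singleton s₁)
  have haeS2 : ∀ᵐ (s : ℝ) ∂volume, s ≠ s₂ := compl_mem_ae_iff.mpr (measure_singleton s₂)
  have hpow : ∀ v : R3, ‖v‖ ^ ((2:ENNReal).toReal) = ‖v‖ ^ 2 := by
    intro v
    rw [ENNReal.toReal_ofNat, show (2:ℝ) = ((2:ℕ):ℝ) from by norm_num, Real.rpow_natCast]
  have hq1int : IntegrableOn (fun s => ‖hh s‖ ^ 2) (Icc 0 L) volume := by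
    have h0 := Fl2h.integrable_norm_rpow (by norm_num) (by norm_num)
    simp only [hpow] at h0
    exact h0
  have hq2int : IntegrableOn (fun s => ‖deriv (deriv γ) s‖ ^ 2) (Icc 0 L) volume := by
    have h0 := hγ.1.l2.integrable_norm_rpow (by norm_num) (by norm_num)
    simp only [hpow] at h0
    exact h0
  have IIq1 : ∀ x ∈ Icc (0:ℝ) L, ∀ y ∈ Icc (0:ℝ) L,
      IntervalIntegrable (fun s => ‖hh s‖ ^ 2) volume x y := by
    intro x hx y hy
    rw [intervalIntegrable_iff]
    exact hq1int.mono_set ((uIoc_subset_uIcc).trans (uIcc_subset_Icc hx hy))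
  have IIq2 : ∀ x ∈ Icc (0:ℝ) L, ∀ y ∈ Icc (0:ℝ) L,
      IntervalIntegrable (fun s => ‖deriv (deriv γ) s‖ ^ 2) volume x y := by
    intro x hx y hy
    rw [intervalIntegrable_iff]
    exact hq2int.mono_set ((uIoc_subset_uIcc).trans (uIcc_subset_Icc hx hy))
  have h0L : (0:ℝ) ∈ Icc (0:ℝ) L := ⟨le_rfl, hL.le⟩
  have hLL : L ∈ Icc (0:ℝ) L := ⟨hL.le, le_rfl⟩
  have e_out1 : ∫ s in (0:ℝ)..s₁, ‖hh s‖ ^ 2 = ∫ s in (0:ℝ)..s₁, ‖deriv (deriv γ) s‖ ^ 2 := by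
    refine intervalIntegral.integral_congr_ae ?_
    filter_upwards [haeS1] with s hs hmem
    have h1 : s ∈ uIcc 0 s₁ := uIoc_subset_uIcc hmem
    rw [uIcc_of_le hs₁0] at h1
    rw [hhhout s (fun hc => hs (le_antisymm h1.2 hc.1))]
  have e_out2 : ∫ s in s₂..L, ‖hh s‖ ^ 2 = ∫ s in s₂..L, ‖deriv (deriv γ) s‖ ^ 2 := by
    refine intervalIntegral.integral_congr_ae ?_
    filter_upwards [haeS2] with s hs hmem
    have h1 : s ∈ uIcc s₂ L := uIoc_subset_uIcc hmem
    rw [uIcc_of_le hs₂L] at h1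
    rw [hhhout s (fun hc => hs (le_antisymm hc.2 h1.1))]
  have e_mid : ∫ s in s₁..s₂, ‖hh s‖ ^ 2 = ∫ s in s₁..s₂, ‖deriv (deriv γ) s‖ ^ 2 := by
    have e1 : ∫ s in s₁..s₂, ‖hh s‖ ^ 2
        = ∫ s in s₁..s₂, ‖deriv (deriv γ) (τ s)‖ ^ 2 := by
      refine intervalIntegral.integral_congr (fun s hs => ?_)
      rw [uIcc_of_le hs₁₂.le] at hs
      rw [hhhin s hs, U.norm_map]
    have haesm : AEStronglyMeasurable (fun u => ‖deriv (deriv γ) u‖ ^ 2)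
        (volume.restrict (Icc s₁ s₂)) :=
      (hmem2γ.1.norm.mul hmem2γ.1.norm).congr
        (Filter.Eventually.of_forall fun u => (pow_two _).symm)
    have e2 : ∫ s in Icc s₁ s₂, ‖deriv (deriv γ) (τ s)‖ ^ 2
        = ∫ u in Icc s₁ s₂, ‖deriv (deriv γ) u‖ ^ 2 := by
      have h0 := integral_map (φ := τ) (μ := volume.restrict (Icc s₁ s₂))
        hτmeas.aemeasurable (f := fun u => ‖deriv (deriv γ) u‖ ^ 2) (by rw [M]; exact haesm)
      rw [M] at h0
      exact h0.symm
    rw [e1, intervalIntegral.integral_of_le hs₁₂.le, intervalIntegral.integral_of_le hs₁₂.le,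
      ← integral_Icc_eq_integral_Ioc, ← integral_Icc_eq_integral_Ioc, e2]
  have hBen : Ben L ξ = Ben L γ := by
    unfold Ben
    have step1 : ∫ s in Icc (0:ℝ) L, ‖deriv (deriv ξ) s‖ ^ 2
        = ∫ s in Icc (0:ℝ) L, ‖hh s‖ ^ 2 := by
      refine integral_congr_ae ?_
      filter_upwards [Fae_meas] with s hs
      rw [hs]
    have hsplit : ∀ q : ℝ → ℝ, (∀ x ∈ Icc (0:ℝ) L, ∀ y ∈ Icc (0:ℝ) L,
        IntervalIntegrable q volume x y) →
        ∫ s in Icc (0:ℝ) L, q s = (∫ s in (0:ℝ)..s₁, q s) + (∫ s in s₁..s₂, q s)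
          + (∫ s in s₂..L, q s) := by
      intro q hq
      rw [integral_Icc_eq_integral_Ioc, ← intervalIntegral.integral_of_le hL.le]
      rw [← intervalIntegral.integral_add_adjacent_intervals (hq 0 h0L s₂ hs₂mem)
        (hq s₂ hs₂mem L hLL)]
      rw [← intervalIntegral.integral_add_adjacent_intervals (hq 0 h0L s₁ hs₁mem)
        (hq s₁ hs₁mem s₂ hs₂mem)]
    rw [step1, hsplit _ IIq1, hsplit _ IIq2, e_out1, e_out2, e_mid]
  -- ξ is a global minimizer, hence C²
  have hGlobξ : IsGlobalMin3 L P0 P1 V0 V1 ξ := by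
    refine ⟨hAdmξ, fun ζ hζ => ?_⟩
    rw [hBen]
    exact hmin.2 ζ hζ
  have hC2ξ : ContDiffOn ℝ 2 ξ (Icc 0 L) := H ξ hGlobξ
  -- conclusions via the C² jump lemma
  constructor
  · intro hs₁pos hdiff
    have hu : ∀ s ∈ Ioo (0:ℝ) s₁, HasDerivAt gg (deriv (deriv γ) s) s := by
      intro s hs
      have hev : gg =ᶠ[nhds s] deriv γ := by
        filter_upwards [Iio_mem_nhds hs.2] with y hy
        exact hggout y (fun hc => absurd hc.1 (not_le.mpr hy))
      exact (hev.hasDerivAt_iff).mpr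
        (hasDerivAt_deriv_interior hC2 ⟨hs.1, hs.2.trans (hs₁₂.trans_le hs₂L)⟩)
    have hA : Tendsto (fun s => deriv (deriv γ) s) (nhdsWithin s₁ (Ioo 0 s₁))
        (nhds (deriv (deriv γ) s₁)) :=
      (tendsto_second_deriv hL hC2 hdiffγ hs₁mem
        (hasDerivAt_deriv_interior hC2 ⟨hs₁pos, hs₁₂.trans_le hs₂L⟩).differentiableAt).mono_left
        (nhdsWithin_mono _ (Ioo_subset_Ioo le_rfl (hs₁₂.le.trans hs₂L)))
    have hτtend : Tendsto τ (nhdsWithin s₁ (Ioo s₁ s₂)) (nhdsWithin (τ s₁) (Ioo 0 L)) := by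
      refine tendsto_nhdsWithin_of_tendsto_nhds_of_eventually_within _
        ((hτcont.tendsto s₁).mono_left nhdsWithin_le_nhds) ?_
      filter_upwards [self_mem_nhdsWithin] with y hy
      exact hsubo (hτIoo y hy)
    have hB : Tendsto (fun s => U (deriv (deriv γ) (τ s))) (nhdsWithin s₁ (Ioo s₁ s₂))
        (nhds (U (deriv (deriv γ) (τ s₁)))) := by
      have h1 := tendsto_second_deriv hL hC2 hdiffγ hτmem₁ hdiff
      exact (U.continuous.tendsto _).comp (h1.comp hτtend)
    exact (c2_jump hL ξ gg _ _ hs₁pos hs₁₂ le_rfl hs₂L FhasXi hC2ξ hu FD2mid hA hB).symm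
  · intro hs₂lt hdiff
    have hv : ∀ s ∈ Ioo s₂ L, HasDerivAt gg (deriv (deriv γ) s) s := by
      intro s hs
      have hev : gg =ᶠ[nhds s] deriv γ := by
        filter_upwards [Ioi_mem_nhds hs.1] with y hy
        exact hggout y (fun hc => absurd hc.2 (not_le.mpr hy))
      exact (hev.hasDerivAt_iff).mpr
        (hasDerivAt_deriv_interior hC2 ⟨(hs₁0.trans_lt hs₁₂).trans hs.1, hs.2⟩)
    have hτtend : Tendsto τ (nhdsWithin s₂ (Ioo s₁ s₂)) (nhdsWithin (τ s₂) (Ioo 0 L)) := by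
      refine tendsto_nhdsWithin_of_tendsto_nhds_of_eventually_within _
        ((hτcont.tendsto s₂).mono_left nhdsWithin_le_nhds) ?_
      filter_upwards [self_mem_nhdsWithin] with y hy
      exact hsubo (hτIoo y hy)
    have hA : Tendsto (fun s => U (deriv (deriv γ) (τ s))) (nhdsWithin s₂ (Ioo s₁ s₂))
        (nhds (U (deriv (deriv γ) (τ s₂)))) := by
      have h1 := tendsto_second_deriv hL hC2 hdiffγ hτmem₂ hdiff
      exact (U.continuous.tendsto _).comp (h1.comp hτtend)
    have hB : Tendsto (fun s => deriv (deriv γ) s) (nhdsWithin s₂ (Ioo s₂ L))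
        (nhds (deriv (deriv γ) s₂)) :=
      (tendsto_second_deriv hL hC2 hdiffγ hs₂mem
        (hasDerivAt_deriv_interior hC2 ⟨hs₁0.trans_lt hs₁₂, hs₂lt⟩).differentiableAt).mono_left
        (nhdsWithin_mono _ (Ioo_subset_Ioo (hs₁0.trans hs₁₂.le) le_rfl))
    exact c2_jump hL ξ gg _ _ hs₁₂ hs₂lt hs₁0 le_rfl FhasXi hC2ξ FD2mid hv hA hB

/-- non-minimality of spatial elasticae with a transversal
self-intersection. -/
theorem selfIntersection_not_minimal (L : ℝ) (hL : 0 < L)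
    (P0 P1 V0 V1 : R3) (hPP : ‖P0 - P1‖ < L) (hV0 : ‖V0‖ = 1) (hV1 : ‖V1‖ = 1)
    (H : ∀ ξ, IsGlobalMin3 L P0 P1 V0 V1 ξ → ContDiffOn ℝ 2 ξ (Icc 0 L))
    (γ : ℝ → R3) (hγ : Adm3 L P0 P1 V0 V1 γ) (hC2 : ContDiffOn ℝ 2 γ (Icc 0 L))
    (s₁ s₂ : ℝ) (hs₁0 : 0 ≤ s₁) (hs₁₂ : s₁ < s₂) (hs₂L : s₂ ≤ L) (hlen : s₂ - s₁ < L)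
    (hself : γ s₁ = γ s₂)
    (hspan : deriv (deriv γ) s₁ ∉ Submodule.span ℝ {deriv γ s₁, deriv γ s₂} ∨
      deriv (deriv γ) s₂ ∉ Submodule.span ℝ {deriv γ s₁, deriv γ s₂}) :
    ¬ IsGlobalMin3 L P0 P1 V0 V1 γ := by
  intro hmin
  set T₁ : R3 := deriv γ s₁ with hT₁
  set T₂ : R3 := deriv γ s₂ with hT₂
  set S : Submodule ℝ R3 := Submodule.span ℝ {T₁, T₂} with hS
  have hT₁S : T₁ ∈ S := Submodule.subset_span (mem_insert _ _)
  have hT₂S : T₂ ∈ S := Submodule.subset_span (by simp)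
  have hT₁n : ‖T₁‖ = 1 := hγ.1.unit s₁ ⟨hs₁0, hs₁₂.le.trans hs₂L⟩
  have hT₂n : ‖T₂‖ = 1 := hγ.1.unit s₂ ⟨hs₁0.trans hs₁₂.le, hs₂L⟩
  have hd : ∀ t : ℝ, deriv (deriv γ) t ∉ S → DifferentiableAt ℝ (deriv γ) t := by
    intro t ht
    by_contra hc
    rw [deriv_zero_of_not_differentiableAt hc] at ht
    exact ht (zero_mem S)
  set R : R3 ≃ₗᵢ[ℝ] R3 := Submodule.reflection S with hR
  have hRT₁ : R T₁ = T₁ := Submodule.reflection_mem_subspace_eq_self hT₁S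
  have hRT₂ : R T₂ = T₂ := Submodule.reflection_mem_subspace_eq_self hT₂S
  obtain ⟨O, hOT₁, hOT₂, hOinv, hOmap⟩ := exists_O hT₁n hT₂n
  have caseA : 0 < s₁ → deriv (deriv γ) s₁ ∉ S → False := by
    intro hpos hw
    have hU1 : (1:ℝ) • R (deriv γ ((1:ℝ) * s₁ + 0)) = deriv γ s₁ := by
      rw [show (1:ℝ) * s₁ + 0 = s₁ from by ring, one_smul, ← hT₁]
      exact hRT₁
    have hU2 : (1:ℝ) • R (deriv γ ((1:ℝ) * s₂ + 0)) = deriv γ s₂ := by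
      rw [show (1:ℝ) * s₂ + 0 = s₂ from by ring, one_smul, ← hT₂]
      exact hRT₂
    have hcore := (core_construction L hL P0 P1 V0 V1 γ hγ hC2 s₁ s₂ hs₁0 hs₁₂ hs₂L hself
      R 1 0 (Or.inl ⟨rfl, rfl⟩) hU1 hU2 hmin H).1 hpos
      (by rw [show (1:ℝ) * s₁ + 0 = s₁ from by ring]; exact hd s₁ hw)
    rw [show (1:ℝ) * s₁ + 0 = s₁ from by ring] at hcore
    exact hw ((Submodule.reflection_eq_self_iff _).mp hcore)
  have caseB : s₂ < L → deriv (deriv γ) s₂ ∉ S → False := by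
    intro hlt hw
    have hU1 : (1:ℝ) • R (deriv γ ((1:ℝ) * s₁ + 0)) = deriv γ s₁ := by
      rw [show (1:ℝ) * s₁ + 0 = s₁ from by ring, one_smul, ← hT₁]
      exact hRT₁
    have hU2 : (1:ℝ) • R (deriv γ ((1:ℝ) * s₂ + 0)) = deriv γ s₂ := by
      rw [show (1:ℝ) * s₂ + 0 = s₂ from by ring, one_smul, ← hT₂]
      exact hRT₂
    have hcore := (core_construction L hL P0 P1 V0 V1 γ hγ hC2 s₁ s₂ hs₁0 hs₁₂ hs₂L hself
      R 1 0 (Or.inl ⟨rfl, rfl⟩) hU1 hU2 hmin H).2 hlt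
      (by rw [show (1:ℝ) * s₂ + 0 = s₂ from by ring]; exact hd s₂ hw)
    rw [show (1:ℝ) * s₂ + 0 = s₂ from by ring] at hcore
    exact hw ((Submodule.reflection_eq_self_iff _).mp hcore)
  have caseC : deriv (deriv γ) s₁ ∉ S → s₂ < L → deriv (deriv γ) s₂ ∈ S → False := by
    intro hw1 hlt hw2
    have hU1 : (-1:ℝ) • O (deriv γ ((-1:ℝ) * s₁ + (s₁ + s₂))) = deriv γ s₁ := by
      rw [show (-1:ℝ) * s₁ + (s₁ + s₂) = s₂ from by ring, ← hT₂, hOT₂, ← hT₁]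
      simp
    have hU2 : (-1:ℝ) • O (deriv γ ((-1:ℝ) * s₂ + (s₁ + s₂))) = deriv γ s₂ := by
      rw [show (-1:ℝ) * s₂ + (s₁ + s₂) = s₁ from by ring, ← hT₁, hOT₁, ← hT₂]
      simp
    have hcore := (core_construction L hL P0 P1 V0 V1 γ hγ hC2 s₁ s₂ hs₁0 hs₁₂ hs₂L hself
      O (-1) (s₁ + s₂) (Or.inr ⟨rfl, rfl⟩) hU1 hU2 hmin H).2 hlt
      (by rw [show (-1:ℝ) * s₂ + (s₁ + s₂) = s₁ from by ring]; exact hd s₁ hw1)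
    rw [show (-1:ℝ) * s₂ + (s₁ + s₂) = s₁ from by ring] at hcore
    have he : deriv (deriv γ) s₁ = O (deriv (deriv γ) s₂) := by
      rw [← hcore, hOinv]
    exact hw1 (by rw [he]; exact hOmap _ hw2)
  have caseD : deriv (deriv γ) s₂ ∉ S → 0 < s₁ → deriv (deriv γ) s₁ ∈ S → False := by
    intro hw2 hpos hw1
    have hU1 : (-1:ℝ) • O (deriv γ ((-1:ℝ) * s₁ + (s₁ + s₂))) = deriv γ s₁ := by
      rw [show (-1:ℝ) * s₁ + (s₁ + s₂) = s₂ from by ring, ← hT₂, hOT₂, ← hT₁]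
      simp
    have hU2 : (-1:ℝ) • O (deriv γ ((-1:ℝ) * s₂ + (s₁ + s₂))) = deriv γ s₂ := by
      rw [show (-1:ℝ) * s₂ + (s₁ + s₂) = s₁ from by ring, ← hT₁, hOT₁, ← hT₂]
      simp
    have hcore := (core_construction L hL P0 P1 V0 V1 γ hγ hC2 s₁ s₂ hs₁0 hs₁₂ hs₂L hself
      O (-1) (s₁ + s₂) (Or.inr ⟨rfl, rfl⟩) hU1 hU2 hmin H).1 hpos
      (by rw [show (-1:ℝ) * s₁ + (s₁ + s₂) = s₂ from by ring]; exact hd s₂ hw2)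
    rw [show (-1:ℝ) * s₁ + (s₁ + s₂) = s₂ from by ring] at hcore
    have he : deriv (deriv γ) s₂ = O (deriv (deriv γ) s₁) := by
      rw [← hcore, hOinv]
    exact hw2 (by rw [he]; exact hOmap _ hw1)
  rcases hspan with hw | hw
  · rcases eq_or_lt_of_le hs₁0 with h0 | hpos
    · by_cases hw2 : deriv (deriv γ) s₂ ∈ S
      · exact caseC hw (by rw [← h0] at hlen; linarith) hw2
      · exact caseB (by rw [← h0] at hlen; linarith) hw2
    · exact caseA hpos hw
  · rcases eq_or_lt_of_le hs₂L with hL2 | hlt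
    · by_cases hw1 : deriv (deriv γ) s₁ ∈ S
      · exact caseD hw (by rw [hL2] at hlen; linarith) hw1
      · exact caseA (by rw [hL2] at hlen; linarith) hw1
    · exact caseB hlt hw
end
end
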